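/- arXiv:1107.2714 — 6 statements merged into one kernel-verified Lean document; each statement's English description precedes it below -/
import Mathlib

section
/- If X is a random variable with E X = 0 and l(x) = E[|X|^2 1_{|X| ≤ x}] is slowly varying as x → ∞ with E|X|^2 = ∞, then E[|X| 1_{|X| ≥ x}] = o(l(x)/x) as x → ∞. -/
open MeasureTheory ProbabilityTheory Filter Asymptotics Set

lemma auxSqInt {Ω : Type*} [MeasureSpace Ω] [IsProbabilityMeasure (ℙ : Measure Ω)]
    {g : Ω → ℝ} (hgm : Measurable g) (x : ℝ) :
    IntegrableOn (fun ω => |g ω| ^ 2) {ω | |g ω| ≤ x} ℙ := by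
  refine Measure.integrableOn_of_bounded (M := x ^ 2) (measure_ne_top _ _)
    ((hgm.abs.pow_const 2).aestronglyMeasurable) ?_
  filter_upwards [ae_restrict_mem (hgm.abs measurableSet_Iic : MeasurableSet {ω | |g ω| ≤ x})]
    with ω hω
  have h1 : (0:ℝ) ≤ |g ω| := abs_nonneg _
  have h2 : |g ω| ≤ x := hω
  rw [Real.norm_of_nonneg (by positivity)]
  nlinarith

lemma auxStep {Ω : Type*} [MeasureSpace Ω] [IsProbabilityMeasure (ℙ : Measure Ω)]
    {g : Ω → ℝ} (hgm : Measurable g) (hgi : Integrable g ℙ) {z : ℝ} (hz : 0 < z) :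
    ∫ ω in {ω | z < |g ω|}, |g ω| ∂ℙ ≤
      ((∫ ω in {ω | |g ω| ≤ 2*z}, |g ω|^2 ∂ℙ) - ∫ ω in {ω | |g ω| ≤ z}, |g ω|^2 ∂ℙ)/z
      + ∫ ω in {ω | 2*z < |g ω|}, |g ω| ∂ℙ := by
  have habs : Integrable (fun ω => |g ω|) ℙ := hgi.abs
  have hmA : MeasurableSet ({ω | z < |g ω|} ∩ {ω | |g ω| ≤ 2*z}) :=
    (hgm.abs measurableSet_Ioi).inter (hgm.abs measurableSet_Iic)
  have hmB : MeasurableSet {ω | 2*z < |g ω|} := hgm.abs measurableSet_Ioi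
  have hmz : MeasurableSet {ω | |g ω| ≤ z} := hgm.abs measurableSet_Iic
  -- split the set
  have hsplit : {ω | z < |g ω|} =
      ({ω | z < |g ω|} ∩ {ω | |g ω| ≤ 2*z}) ∪ {ω | 2*z < |g ω|} := by
    ext ω
    simp only [Set.mem_setOf_eq, Set.mem_inter_iff, Set.mem_union]
    constructor
    · intro h
      rcases le_or_gt (|g ω|) (2*z) with h2 | h2
      · exact Or.inl ⟨h, h2⟩
      · exact Or.inr h2
    · rintro (⟨h, _⟩ | h)
      · exact h
      · linarith
  have hdisj : Disjoint ({ω | z < |g ω|} ∩ {ω | |g ω| ≤ 2*z}) {ω | 2*z < |g ω|} := by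
    rw [Set.disjoint_left]
    rintro ω ⟨_, h1⟩ h2
    simp only [Set.mem_setOf_eq] at h1 h2
    linarith
  have heq1 : ∫ ω in {ω | z < |g ω|}, |g ω| ∂ℙ =
      (∫ ω in {ω | z < |g ω|} ∩ {ω | |g ω| ≤ 2*z}, |g ω| ∂ℙ)
      + ∫ ω in {ω | 2*z < |g ω|}, |g ω| ∂ℙ := by
    conv_lhs => rw [hsplit]
    exact setIntegral_union hdisj hmB habs.integrableOn habs.integrableOn
  -- bound the middle part by the square
  have hmid : ∫ ω in {ω | z < |g ω|} ∩ {ω | |g ω| ≤ 2*z}, |g ω| ∂ℙ ≤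
      ∫ ω in {ω | z < |g ω|} ∩ {ω | |g ω| ≤ 2*z}, |g ω|^2 / z ∂ℙ := by
    refine setIntegral_mono_on habs.integrableOn
      (((auxSqInt hgm (2*z)).mono_set Set.inter_subset_right).div_const z) hmA ?_
    rintro ω ⟨h1, _⟩
    simp only [Set.mem_setOf_eq] at h1
    have h0 : (0:ℝ) ≤ |g ω| := abs_nonneg _
    rw [le_div_iff₀ hz]
    nlinarith
  -- the square integral over the middle set is the difference of truncations
  have hsq : ∫ ω in {ω | z < |g ω|} ∩ {ω | |g ω| ≤ 2*z}, |g ω|^2 ∂ℙ =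
      (∫ ω in {ω | |g ω| ≤ 2*z}, |g ω|^2 ∂ℙ) - ∫ ω in {ω | |g ω| ≤ z}, |g ω|^2 ∂ℙ := by
    have hsplit2 : {ω | |g ω| ≤ 2*z} =
        {ω | |g ω| ≤ z} ∪ ({ω | z < |g ω|} ∩ {ω | |g ω| ≤ 2*z}) := by
      ext ω
      simp only [Set.mem_setOf_eq, Set.mem_union, Set.mem_inter_iff]
      constructor
      · intro h
        rcases le_or_gt (|g ω|) z with h2 | h2
        · exact Or.inl h2
        · exact Or.inr ⟨h2, h⟩
      · rintro (h | ⟨_, h⟩)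
        · linarith
        · exact h
    have hdisj2 : Disjoint {ω | |g ω| ≤ z} ({ω | z < |g ω|} ∩ {ω | |g ω| ≤ 2*z}) := by
      rw [Set.disjoint_left]
      rintro ω h1 ⟨h2, _⟩
      simp only [Set.mem_setOf_eq] at h1 h2
      linarith
    have := setIntegral_union hdisj2 hmA ((auxSqInt hgm z).mono_set (by
        intro ω h; simp only [Set.mem_setOf_eq] at *; exact h))
      ((auxSqInt hgm (2*z)).mono_set Set.inter_subset_right)
    rw [← hsplit2] at this
    linarith [this]
  calc ∫ ω in {ω | z < |g ω|}, |g ω| ∂ℙ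
      = (∫ ω in {ω | z < |g ω|} ∩ {ω | |g ω| ≤ 2*z}, |g ω| ∂ℙ)
        + ∫ ω in {ω | 2*z < |g ω|}, |g ω| ∂ℙ := heq1
    _ ≤ (∫ ω in {ω | z < |g ω|} ∩ {ω | |g ω| ≤ 2*z}, |g ω|^2 / z ∂ℙ)
        + ∫ ω in {ω | 2*z < |g ω|}, |g ω| ∂ℙ := by linarith [hmid]
    _ = ((∫ ω in {ω | |g ω| ≤ 2*z}, |g ω|^2 ∂ℙ) - ∫ ω in {ω | |g ω| ≤ z}, |g ω|^2 ∂ℙ)/z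
        + ∫ ω in {ω | 2*z < |g ω|}, |g ω| ∂ℙ := by
      rw [integral_div, hsq]

lemma auxUnbdd {Ω : Type*} [MeasureSpace Ω] [IsProbabilityMeasure (ℙ : Measure Ω)]
    {g : Ω → ℝ} (hgm : Measurable g) (hsq_not : ¬ Integrable (fun ω => |g ω|^2) ℙ) (b : ℝ) :
    ∃ a : ℝ, b ≤ ∫ ω in {ω | |g ω| ≤ a}, |g ω|^2 ∂ℙ := by
  by_contra h
  push_neg at h
  apply hsq_not
  refine ⟨(hgm.abs.pow_const 2).aestronglyMeasurable, ?_⟩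
  rw [hasFiniteIntegral_iff_ofReal (ae_of_all _ fun ω => by positivity)]
  calc ∫⁻ ω, ENNReal.ofReal (|g ω|^2) ∂ℙ
      = ∫⁻ ω, ⨆ n : ℕ, ({ω | |g ω| ≤ (n:ℝ)}.indicator
          (fun ω => ENNReal.ofReal (|g ω|^2))) ω ∂ℙ := by
        refine lintegral_congr fun ω => ?_
        refine le_antisymm ?_ ?_
        · have hmem : ω ∈ {ω' | |g ω'| ≤ ((⌈|g ω|⌉₊ : ℕ) : ℝ)} := by
            simp only [Set.mem_setOf_eq]
            exact Nat.le_ceil _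
          exact le_iSup_of_le ⌈|g ω|⌉₊
            (le_of_eq (Set.indicator_of_mem hmem (fun ω => ENNReal.ofReal (|g ω| ^ 2))).symm)
        · exact iSup_le fun n => Set.indicator_le_self _ _ _
    _ = ⨆ n : ℕ, ∫⁻ ω, ({ω | |g ω| ≤ (n:ℝ)}.indicator
          (fun ω => ENNReal.ofReal (|g ω|^2))) ω ∂ℙ := by
        refine lintegral_iSup (fun n => ?_) (fun n m hnm => ?_)
        · exact (ENNReal.measurable_ofReal.comp (hgm.abs.pow_const 2)).indicator
            (hgm.abs measurableSet_Iic)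
        · intro ω
          refine Set.indicator_le_indicator_of_subset ?_ (fun _ => zero_le) ω
          intro a ha
          simp only [Set.mem_setOf_eq] at *
          exact ha.trans (by exact_mod_cast hnm)
    _ ≤ ENNReal.ofReal b := by
        refine iSup_le fun n => ?_
        rw [lintegral_indicator (s := {ω | |g ω| ≤ (n:ℝ)}) (hgm.abs measurableSet_Iic)]
        rw [← ofReal_integral_eq_lintegral_ofReal (auxSqInt hgm (n:ℝ))
          (ae_of_all _ fun ω => by positivity)]
        exact ENNReal.ofReal_le_ofReal (h n).le
    _ < ⊤ := ENNReal.ofReal_lt_top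

lemma auxTail {Ω : Type*} [MeasureSpace Ω] [IsProbabilityMeasure (ℙ : Measure Ω)]
    {g : Ω → ℝ} (hgm : Measurable g) (hgi : Integrable g ℙ) {y : ℝ} (hy : 0 < y) :
    Tendsto (fun n : ℕ => ∫ ω in {ω | 2^n * y < |g ω|}, |g ω| ∂ℙ) atTop (nhds 0) := by
  have hsm : ∀ n : ℕ, MeasurableSet {ω | 2^n * y < |g ω|} :=
    fun n => hgm.abs measurableSet_Ioi
  have hanti : Antitone (fun n : ℕ => {ω | 2^n * y < |g ω|}) := by
    intro n m hnm ω hω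
    simp only [Set.mem_setOf_eq] at *
    have : (2:ℝ)^n * y ≤ 2^m * y := by
      have := pow_le_pow_right₀ (by norm_num : (1:ℝ) ≤ 2) hnm
      nlinarith
    linarith
  have h := tendsto_setIntegral_of_antitone hsm hanti ⟨0, hgi.abs.integrableOn⟩
  have hempty : (⋂ n : ℕ, {ω | 2^n * y < |g ω|}) = (∅ : Set Ω) := by
    ext ω
    simp only [Set.mem_iInter, Set.mem_setOf_eq, Set.mem_empty_iff_false, iff_false, not_forall,
      not_lt]
    obtain ⟨n, hn⟩ := pow_unbounded_of_one_lt (|g ω| / y) (by norm_num : (1:ℝ) < 2)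
    exact ⟨n, by rw [div_lt_iff₀ hy] at hn; linarith⟩
  rw [hempty] at h
  simpa using h

lemma auxOneLePow (n : ℕ) : (1:ℝ) ≤ 2 ^ n := by
  induction n with
  | zero => norm_num
  | succ m ih => rw [pow_succ]; nlinarith

/-- If `X` is a random variable with `E X = 0` and
`l x = E[|X|² 1_{|X| ≤ x}]` is slowly varying as `x → ∞` with `E|X|² = ∞`, then
`E[|X| 1_{|X| ≥ x}] = o(l(x)/x)` as `x → ∞`. -/
theorem truncated_first_moment_littleO_of_slowly_varying
    {Ω : Type*} [MeasureSpace Ω] [IsProbabilityMeasure (ℙ : Measure Ω)]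
    (X : Ω → ℝ) (hX : AEMeasurable X ℙ)
    (hmean : ∫ ω, X ω ∂ℙ = 0)
    (l : ℝ → ℝ)
    (hl : ∀ x : ℝ, l x = ∫ ω in {ω | |X ω| ≤ x}, |X ω| ^ 2 ∂ℙ)
    (hslow : ∀ c : ℝ, 0 < c → Tendsto (fun x => l (c * x) / l x) atTop (nhds 1))
    (hinf : ¬ Integrable (fun ω => |X ω| ^ 2) ℙ) :
    (fun x : ℝ => ∫ ω in {ω | x ≤ |X ω|}, |X ω| ∂ℙ) =o[atTop] (fun x => l x / x) := by
  obtain ⟨g, hgm, hgX⟩ : ∃ g : Ω → ℝ, Measurable g ∧ X =ᵐ[ℙ] g :=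
    ⟨hX.mk X, hX.measurable_mk, hX.ae_eq_mk⟩
  -- transfer everything to the measurable representative g
  have hsetle : ∀ x : ℝ, {ω | |X ω| ≤ x} =ᵐ[ℙ] {ω | |g ω| ≤ x} := fun x => by
    rw [Filter.eventuallyEq_set]
    filter_upwards [hgX] with ω h
    simp [Set.mem_setOf_eq, h]
  have hsetge : ∀ x : ℝ, {ω | x ≤ |X ω|} =ᵐ[ℙ] {ω | x ≤ |g ω|} := fun x => by
    rw [Filter.eventuallyEq_set]
    filter_upwards [hgX] with ω h
    simp [Set.mem_setOf_eq, h]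
  have hlg : ∀ x : ℝ, l x = ∫ ω in {ω | |g ω| ≤ x}, |g ω| ^ 2 ∂ℙ := fun x => by
    rw [hl x, setIntegral_congr_set (hsetle x)]
    refine integral_congr_ae (ae_restrict_of_ae ?_)
    filter_upwards [hgX] with ω h
    rw [h]
  have hLHS : ∀ x : ℝ, ∫ ω in {ω | x ≤ |X ω|}, |X ω| ∂ℙ = ∫ ω in {ω | x ≤ |g ω|}, |g ω| ∂ℙ :=
    fun x => by
    rw [setIntegral_congr_set (hsetge x)]
    refine integral_congr_ae (ae_restrict_of_ae ?_)
    filter_upwards [hgX] with ω h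
    rw [h]
  have hfun : (fun x : ℝ => ∫ ω in {ω | x ≤ |X ω|}, |X ω| ∂ℙ)
      = fun x : ℝ => ∫ ω in {ω | x ≤ |g ω|}, |g ω| ∂ℙ := funext hLHS
  rw [hfun]
  have hl0 : ∀ x : ℝ, 0 ≤ l x := fun x => by
    rw [hlg x]
    exact setIntegral_nonneg (hgm.abs measurableSet_Iic) (fun ω _ => by positivity)
  have hlmono : Monotone l := fun a b hab => by
    rw [hlg a, hlg b]
    refine setIntegral_mono_set (auxSqInt hgm b) (ae_of_all _ fun ω => by positivity)
      (HasSubset.Subset.eventuallyLE fun ω h => ?_)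
    simp only [Set.mem_setOf_eq] at *
    linarith
  by_cases hgi : Integrable g ℙ
  · -- main case
    -- l tends to infinity
    have hsq_not : ¬ Integrable (fun ω => |g ω| ^ 2) ℙ := by
      intro h
      exact hinf (h.congr (by filter_upwards [hgX] with ω hω; rw [hω]))
    have hltop : Tendsto l atTop atTop := by
      refine tendsto_atTop_atTop_of_monotone hlmono (fun b => ?_)
      obtain ⟨a, ha⟩ := auxUnbdd hgm hsq_not b
      exact ⟨a, by rw [hlg a]; exact ha⟩
    rw [isLittleO_iff]
    intro c hc
    set ε : ℝ := min (c / 8) (1 / 2) with hεdef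
    have hε : 0 < ε := lt_min (by linarith) (by norm_num)
    have hε2 : ε ≤ 1 / 2 := min_le_right _ _
    have hεc : 8 * ε ≤ c := by
      have := min_le_left (c / 8) (1 / 2)
      calc 8 * ε ≤ 8 * (c / 8) := by linarith
        _ = c := by ring
    -- eventually: l (2 y) ≤ (1+ε) l y and l y ≥ 1
    have hev : ∀ᶠ y in atTop, l (2 * y) ≤ (1 + ε) * l y ∧ 1 ≤ l y := by
      have h1 := Metric.tendsto_nhds.mp (hslow 2 (by norm_num)) ε hε
      have h2 := hltop.eventually_ge_atTop 1
      filter_upwards [h1, h2] with y hy1 hy2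
      refine ⟨?_, hy2⟩
      rw [Real.dist_eq, abs_lt] at hy1
      have hly : 0 < l y := by linarith
      have hlt : l (2 * y) / l y < 1 + ε := by linarith [hy1.2]
      have := (div_lt_iff₀ hly).mp hlt
      linarith
    obtain ⟨x₁, hx₁⟩ := eventually_atTop.mp hev
    set x₀ : ℝ := max x₁ 1 with hx₀def
    have hx₀pos : 0 < x₀ := lt_of_lt_of_le one_pos (le_max_right _ _)
    have hx₀ : ∀ y, x₀ ≤ y → l (2 * y) ≤ (1 + ε) * l y ∧ 1 ≤ l y :=
      fun y hy => hx₁ y (le_trans (le_max_left _ _) hy)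
    -- the induction
    have hmain : ∀ y, x₀ ≤ y → ∀ n : ℕ,
        (∫ ω in {ω | y < |g ω|}, |g ω| ∂ℙ) ≤
          ε * (l y / y) * (∑ k ∈ Finset.range n, ((1 + ε) / 2) ^ k)
          + (∫ ω in {ω | 2 ^ n * y < |g ω|}, |g ω| ∂ℙ)
        ∧ l (2 ^ n * y) ≤ (1 + ε) ^ n * l y := by
      intro y hy n
      have hy0 : 0 < y := lt_of_lt_of_le hx₀pos hy
      induction n with
      | zero => simp
      | succ n ih =>
        obtain ⟨ih1, ih2⟩ := ih
        have hzy : x₀ ≤ 2 ^ n * y := by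
          have h1 : (1:ℝ) ≤ 2 ^ n := auxOneLePow n
          nlinarith
        have hz0 : (0:ℝ) < 2 ^ n * y := by positivity
        obtain ⟨hstep1, hstep2⟩ := hx₀ _ hzy
        have hstep := auxStep hgm hgi hz0
        rw [← hlg, ← hlg] at hstep
        have hdiff : l (2 * (2 ^ n * y)) - l (2 ^ n * y) ≤ ε * ((1 + ε) ^ n * l y) := by
          have := hl0 (2 ^ n * y)
          nlinarith
        have hpow : (2:ℝ) ^ (n+1) * y = 2 * (2 ^ n * y) := by ring
        constructor
        · calc ∫ ω in {ω | y < |g ω|}, |g ω| ∂ℙ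
              ≤ ε * (l y / y) * (∑ k ∈ Finset.range n, ((1 + ε) / 2) ^ k)
                + (∫ ω in {ω | 2 ^ n * y < |g ω|}, |g ω| ∂ℙ) := ih1
            _ ≤ ε * (l y / y) * (∑ k ∈ Finset.range n, ((1 + ε) / 2) ^ k)
                + ((l (2 * (2 ^ n * y)) - l (2 ^ n * y)) / (2 ^ n * y)
                  + ∫ ω in {ω | 2 * (2 ^ n * y) < |g ω|}, |g ω| ∂ℙ) := by linarith
            _ ≤ ε * (l y / y) * (∑ k ∈ Finset.range n, ((1 + ε) / 2) ^ k)
                + (ε * (l y / y) * ((1 + ε) / 2) ^ n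
                  + ∫ ω in {ω | 2 * (2 ^ n * y) < |g ω|}, |g ω| ∂ℙ) := by
                have hb : (l (2 * (2 ^ n * y)) - l (2 ^ n * y)) / (2 ^ n * y)
                    ≤ ε * (l y / y) * ((1 + ε) / 2) ^ n := by
                  rw [div_le_iff₀ hz0]
                  have hexp : ε * (l y / y) * ((1 + ε) / 2) ^ n * (2 ^ n * y)
                      = ε * ((1 + ε) ^ n * l y) := by
                    rw [div_pow]
                    field_simp
                  rw [hexp]
                  exact hdiff
                linarith
            _ = ε * (l y / y) * (∑ k ∈ Finset.range (n+1), ((1 + ε) / 2) ^ k)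
                + (∫ ω in {ω | 2 ^ (n+1) * y < |g ω|}, |g ω| ∂ℙ) := by
                rw [Finset.sum_range_succ, hpow]
                ring
        · rw [hpow]
          calc l (2 * (2 ^ n * y)) ≤ (1 + ε) * l (2 ^ n * y) := hstep1
            _ ≤ (1 + ε) * ((1 + ε) ^ n * l y) := by nlinarith
            _ = (1 + ε) ^ (n+1) * l y := by ring
    -- sum bound and limit
    have hbound : ∀ y, x₀ ≤ y →
        (∫ ω in {ω | y < |g ω|}, |g ω| ∂ℙ) ≤ 4 * ε * (l y / y) := by
      intro y hy
      have hy0 : 0 < y := lt_of_lt_of_le hx₀pos hy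
      have hsum : ∀ n : ℕ, (∑ k ∈ Finset.range n, ((1 + ε) / 2) ^ k) ≤ 4 := by
        intro n
        have hr0 : (0:ℝ) ≤ (1 + ε) / 2 := by linarith
        have hr1 : (1 + ε) / 2 ≤ 3 / 4 := by linarith
        calc (∑ k ∈ Finset.range n, ((1 + ε) / 2) ^ k)
            ≤ ∑ k ∈ Finset.range n, ((3:ℝ) / 4) ^ k := by
              refine Finset.sum_le_sum fun k _ => pow_le_pow_left₀ hr0 hr1 k
          _ ≤ 4 := by
              have hs : (∑ k ∈ Finset.range n, ((3:ℝ)/4) ^ k) ≤ ∑' k : ℕ, ((3:ℝ)/4) ^ k :=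
                Summable.sum_le_tsum _ (fun k _ => by positivity)
                  ⟨_, hasSum_geometric_of_lt_one (by norm_num) (by norm_num)⟩
              rw [tsum_geometric_of_lt_one (by norm_num) (by norm_num)] at hs
              norm_num at hs
              linarith
      have hconst : ∀ n : ℕ, (∫ ω in {ω | y < |g ω|}, |g ω| ∂ℙ) - 4 * ε * (l y / y)
          ≤ ∫ ω in {ω | 2 ^ n * y < |g ω|}, |g ω| ∂ℙ := by
        intro n
        obtain ⟨h1, _⟩ := hmain y hy n
        have hly : 0 ≤ l y / y := div_nonneg (hl0 y) hy0.le
        have hS := hsum n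
        have hmul : ε * (l y / y) * (∑ k ∈ Finset.range n, ((1 + ε) / 2) ^ k)
            ≤ ε * (l y / y) * 4 :=
          mul_le_mul_of_nonneg_left hS (mul_nonneg hε.le hly)
        linarith
      have htail := auxTail hgm hgi hy0
      have := ge_of_tendsto htail (Eventually.of_forall hconst)
      linarith
    -- conclude
    filter_upwards [eventually_ge_atTop (2 * x₀), eventually_gt_atTop (0:ℝ)] with x hx hx0
    have hx2 : x₀ ≤ x / 2 := by linarith
    have hmono2 : (∫ ω in {ω | x ≤ |g ω|}, |g ω| ∂ℙ) ≤ ∫ ω in {ω | x / 2 < |g ω|}, |g ω| ∂ℙ := by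
      refine setIntegral_mono_set hgi.abs.integrableOn (ae_of_all _ fun ω => abs_nonneg _)
        (HasSubset.Subset.eventuallyLE fun ω h => ?_)
      simp only [Set.mem_setOf_eq] at *
      linarith
    have hb := hbound (x / 2) hx2
    have hnn : 0 ≤ ∫ ω in {ω | x ≤ |g ω|}, |g ω| ∂ℙ :=
      setIntegral_nonneg (hgm.abs measurableSet_Ici) (fun ω _ => abs_nonneg _)
    have hlx2 : l (x / 2) ≤ l x := hlmono (by linarith)
    rw [Real.norm_of_nonneg hnn, Real.norm_of_nonneg (div_nonneg (hl0 x) hx0.le)]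
    have harith : 4 * ε * (l (x / 2) / (x / 2)) = 8 * ε * (l (x / 2) / x) := by
      field_simp
      ring
    have h8 : 8 * ε * (l (x / 2) / x) ≤ 8 * ε * (l x / x) := by
      have hdiv : l (x / 2) / x ≤ l x / x := by gcongr
      nlinarith
    calc (∫ ω in {ω | x ≤ |g ω|}, |g ω| ∂ℙ)
        ≤ ∫ ω in {ω | x / 2 < |g ω|}, |g ω| ∂ℙ := hmono2
      _ ≤ 4 * ε * (l (x / 2) / (x / 2)) := hb
      _ = 8 * ε * (l (x / 2) / x) := harith
      _ ≤ 8 * ε * (l x / x) := h8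
      _ ≤ c * (l x / x) := by
          have : 0 ≤ l x / x := div_nonneg (hl0 x) hx0.le
          nlinarith
  · -- junk case: X is not integrable, so all truncated tail integrals are 0
    have hzero : ∀ x : ℝ, (∫ ω in {ω | x ≤ |g ω|}, |g ω| ∂ℙ) = 0 := by
      intro x
      refine integral_undef fun h => ?_
      apply hgi
      have h2 : IntegrableOn (fun ω => |g ω|) {ω | |g ω| ≤ x} ℙ := by
        refine Measure.integrableOn_of_bounded (M := max x 0) (measure_ne_top _ _)
          hgm.abs.aestronglyMeasurable ?_
        filter_upwards [ae_restrict_mem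
          (hgm.abs measurableSet_Iic : MeasurableSet {ω | |g ω| ≤ x})] with ω hω
        rw [Real.norm_of_nonneg (abs_nonneg _)]
        exact le_max_of_le_left hω
      have h' : IntegrableOn (fun ω => |g ω|) {ω | x ≤ |g ω|} ℙ := h
      have hunion := h'.union h2
      have huniv : {ω | x ≤ |g ω|} ∪ {ω | |g ω| ≤ x} = Set.univ := by
        ext ω
        simp [Set.mem_setOf_eq, le_total]
      rw [huniv, integrableOn_univ] at hunion
      exact (integrable_norm_iff hgm.aestronglyMeasurable).mp (by simpa using hunion)
    rw [isLittleO_iff]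
    intro c hc
    filter_upwards with x
    rw [hzero x]
    simp
    positivity
end

section
/- Let K : ℝ → ℝ be a nonnegative kernel with ∫ K = 1, let μ be a probability measure on ℝ, h > 0, and z ∈ ℂ with Im z > 0. Then the Stieltjes transform of the smoothed measure satisfies: ∫∫ (λ + y h − z)^{-1} K(y) dy dμ(λ) differs from ∫ (λ − z)^{-1} dμ(λ) by at most 2ε/Im z + h y_0/(Im z)^2, where y_0 is chosen so that ∫_{|y| > y_0} K(y) dy ≤ ε. -/
open MeasureTheory Complex

section aux

variable (z : ℂ)

lemma aux_inv_bound (hz : 0 < z.im) (w : ℂ) (hw : w.im = -z.im) : ‖w⁻¹‖ ≤ 1 / z.im := by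
  have h1 : z.im ≤ ‖w‖ := by
    calc z.im = |w.im| := by rw [hw, abs_neg, abs_of_pos hz]
    _ ≤ ‖w‖ := Complex.abs_im_le_norm w
  rw [norm_inv, one_div]
  exact inv_anti₀ hz h1

lemma aux_ne_zero (hz : 0 < z.im) (w : ℂ) (hw : w.im = -z.im) : w ≠ 0 := by
  intro h; rw [h] at hw; simp at hw; linarith

lemma aux_im (l y h : ℝ) : ((l : ℂ) + ↑y * ↑h - z).im = -z.im := by simp

lemma aux_im' (l : ℝ) : ((l : ℂ) - z).im = -z.im := by simp

lemma aux_diff_bound (hz : 0 < z.im) (h : ℝ) (hh : 0 < h) (l y : ℝ) :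
    ‖((l : ℂ) + ↑y * ↑h - z)⁻¹ - ((l : ℂ) - z)⁻¹‖ ≤ |y| * h / z.im ^ 2 := by
  set a : ℂ := (l : ℂ) + ↑y * ↑h - z with ha
  set b : ℂ := (l : ℂ) - z with hb
  have hane : a ≠ 0 := aux_ne_zero z hz a (aux_im z l y h)
  have hbne : b ≠ 0 := aux_ne_zero z hz b (aux_im' z l)
  have key : a⁻¹ - b⁻¹ = (b - a) * (a⁻¹ * b⁻¹) := by
    field_simp
  have hba : b - a = -((y : ℂ) * (h : ℂ)) := by rw [ha, hb]; ring
  have hnba : ‖b - a‖ = |y| * h := by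
    rw [hba, norm_neg]
    rw [show ((y:ℂ) * (h:ℂ)) = ((y * h : ℝ) : ℂ) by push_cast; ring]
    rw [Complex.norm_real, Real.norm_eq_abs, abs_mul, abs_of_pos hh]
  rw [key, norm_mul, norm_mul, hnba]
  have b1 := aux_inv_bound z hz a (aux_im z l y h)
  have b2 := aux_inv_bound z hz b (aux_im' z l)
  have hyh : 0 ≤ |y| * h := mul_nonneg (abs_nonneg y) hh.le
  calc |y| * h * (‖a⁻¹‖ * ‖b⁻¹‖) ≤ |y| * h * (1 / z.im * (1 / z.im)) := by
        apply mul_le_mul_of_nonneg_left _ hyh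
        exact mul_le_mul b1 b2 (norm_nonneg _) (by positivity)
    _ = |y| * h / z.im ^ 2 := by field_simp

end aux

/-- The Stieltjes transform of the kernel-smoothed measure is close to the
Stieltjes transform of the measure itself: if `∫_{|y|>y₀} K ≤ ε` then the two
transforms differ by at most `2ε/Im z + h y₀/(Im z)²`. -/
theorem smoothed_stieltjes_close
    (K : ℝ → ℝ) (hKmeas : Measurable K) (hKnonneg : ∀ x, 0 ≤ K x)
    (hKint : ∫ x, K x = 1)
    (μ : Measure ℝ) [IsProbabilityMeasure μ]
    (h : ℝ) (hh : 0 < h) (z : ℂ) (hz : 0 < z.im)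
    (ε y₀ : ℝ) (hε : 0 < ε) (hy₀ : 0 < y₀)
    (htail : ∫ y in {y : ℝ | y₀ < |y|}, K y ≤ ε) :
    ‖(∫ l : ℝ, (∫ y : ℝ, (K y : ℂ) * ((l : ℂ) + y * h - z)⁻¹) ∂μ)
        - ∫ l : ℝ, ((l : ℂ) - z)⁻¹ ∂μ‖
      ≤ 2 * ε / z.im + h * y₀ / z.im ^ 2 := by
  set d := z.im with hd
  have hKi : Integrable K := integrable_of_integral_eq_one hKint
  have hKiC : Integrable (fun y => (K y : ℂ)) := hKi.ofReal
  -- pointwise inv bounds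
  have binva : ∀ l y : ℝ, ‖((l : ℂ) + ↑y * ↑h - z)⁻¹‖ ≤ 1 / d :=
    fun l y => aux_inv_bound z hz _ (aux_im z l y h)
  have binvb : ∀ l : ℝ, ‖((l : ℂ) - z)⁻¹‖ ≤ 1 / d :=
    fun l => aux_inv_bound z hz _ (aux_im' z l)
  -- integrability of the inner integrand, for each l
  have minner : ∀ l : ℝ, Measurable (fun y => (K y : ℂ) * ((l : ℂ) + ↑y * ↑h - z)⁻¹) := by
    intro l
    apply (Complex.measurable_ofReal.comp hKmeas).mul
    exact ((measurable_const.add ((Complex.measurable_ofReal.mul measurable_const))).sub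
      measurable_const).inv
  have iinner : ∀ l : ℝ, Integrable (fun y => (K y : ℂ) * ((l : ℂ) + ↑y * ↑h - z)⁻¹) := by
    intro l
    apply (hKi.mul_const (1 / d)).mono' (minner l).aestronglyMeasurable
    filter_upwards with y
    rw [norm_mul, Complex.norm_real, Real.norm_eq_abs, _root_.abs_of_nonneg (hKnonneg y)]
    exact mul_le_mul_of_nonneg_left (binva l y) (hKnonneg y)
  have iinner' : ∀ l : ℝ, Integrable (fun y => (K y : ℂ) * ((l : ℂ) - z)⁻¹) :=
    fun l => hKiC.mul_const _
  -- the constant inner integral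
  have hconst : ∀ l : ℝ, (∫ y : ℝ, (K y : ℂ) * ((l : ℂ) - z)⁻¹) = ((l : ℂ) - z)⁻¹ := by
    intro l
    rw [integral_mul_const,
      show (fun a : ℝ => ((K a : ℂ))) = (fun a => (RCLike.ofReal (K a) : ℂ)) from rfl,
      integral_ofReal, hKint]
    simp
  -- per-l bound on the difference
  have keybound : ∀ l : ℝ,
      ‖(∫ y : ℝ, (K y : ℂ) * ((l : ℂ) + ↑y * ↑h - z)⁻¹) - ((l : ℂ) - z)⁻¹‖
        ≤ 2 * ε / d + h * y₀ / d ^ 2 := by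
    intro l
    rw [← hconst l, ← integral_sub (iinner l) (iinner' l)]
    have hdiff : ∀ y : ℝ, (K y : ℂ) * ((l : ℂ) + ↑y * ↑h - z)⁻¹ - (K y : ℂ) * ((l : ℂ) - z)⁻¹
        = (K y : ℂ) * (((l : ℂ) + ↑y * ↑h - z)⁻¹ - ((l : ℂ) - z)⁻¹) := fun y => by ring
    simp_rw [hdiff]
    -- bound the integral of norms
    set D : ℝ → ℂ := fun y => ((l : ℂ) + ↑y * ↑h - z)⁻¹ - ((l : ℂ) - z)⁻¹ with hD
    have hDb : ∀ y : ℝ, ‖D y‖ ≤ 2 / d := by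
      intro y
      calc ‖D y‖ ≤ ‖((l : ℂ) + ↑y * ↑h - z)⁻¹‖ + ‖((l : ℂ) - z)⁻¹‖ := norm_sub_le _ _
        _ ≤ 1 / d + 1 / d := add_le_add (binva l y) (binvb l)
        _ = 2 / d := by ring
    have hG : Integrable (fun y => K y * ‖D y‖) := by
      apply (hKi.mul_const (2 / d)).mono'
      · apply Measurable.aestronglyMeasurable
        apply hKmeas.mul
        apply Measurable.norm
        exact (((measurable_const.add ((Complex.measurable_ofReal.mul
          measurable_const))).sub measurable_const).inv).sub measurable_const
      · filter_upwards with y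
        rw [Real.norm_eq_abs, abs_mul, _root_.abs_of_nonneg (hKnonneg y),
          _root_.abs_of_nonneg (norm_nonneg _)]
        exact mul_le_mul_of_nonneg_left (hDb y) (hKnonneg y)
    have step1 : ‖∫ y : ℝ, (K y : ℂ) * D y‖ ≤ ∫ y : ℝ, K y * ‖D y‖ := by
      calc ‖∫ y : ℝ, (K y : ℂ) * D y‖ ≤ ∫ y : ℝ, ‖(K y : ℂ) * D y‖ :=
            norm_integral_le_integral_norm _
        _ = ∫ y : ℝ, K y * ‖D y‖ := by
            congr 1; funext y
            rw [norm_mul, Complex.norm_real, Real.norm_eq_abs, _root_.abs_of_nonneg (hKnonneg y)]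
    refine step1.trans ?_
    -- split into tail and core
    set S : Set ℝ := {y : ℝ | y₀ < |y|} with hS
    have hSmeas : MeasurableSet S := measurableSet_lt measurable_const continuous_abs.measurable
    have hsplit : (∫ y : ℝ, K y * ‖D y‖)
        = (∫ y in S, K y * ‖D y‖) + ∫ y in Sᶜ, K y * ‖D y‖ :=
      (integral_add_compl hSmeas hG).symm
    rw [hsplit]
    have tailb : (∫ y in S, K y * ‖D y‖) ≤ 2 * ε / d := by
      have : (∫ y in S, K y * ‖D y‖) ≤ ∫ y in S, K y * (2 / d) := by
        apply setIntegral_mono_on hG.integrableOn ((hKi.mul_const _).integrableOn) hSmeas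
        intro y _
        exact mul_le_mul_of_nonneg_left (hDb y) (hKnonneg y)
      refine this.trans ?_
      rw [integral_mul_const]
      calc (∫ y in S, K y) * (2 / d) ≤ ε * (2 / d) := by
            apply mul_le_mul_of_nonneg_right htail (by positivity)
        _ = 2 * ε / d := by ring
    have coreb : (∫ y in Sᶜ, K y * ‖D y‖) ≤ h * y₀ / d ^ 2 := by
      have step : (∫ y in Sᶜ, K y * ‖D y‖) ≤ ∫ y in Sᶜ, K y * (h * y₀ / d ^ 2) := by
        apply setIntegral_mono_on hG.integrableOn ((hKi.mul_const _).integrableOn)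
          hSmeas.compl
        intro y hy
        apply mul_le_mul_of_nonneg_left _ (hKnonneg y)
        have hyle : |y| ≤ y₀ := le_of_not_gt hy
        calc ‖D y‖ ≤ |y| * h / d ^ 2 := aux_diff_bound z hz h hh l y
          _ ≤ y₀ * h / d ^ 2 := by
              apply div_le_div_of_nonneg_right _ (by positivity)
              exact mul_le_mul_of_nonneg_right hyle hh.le
          _ = h * y₀ / d ^ 2 := by ring
      refine step.trans ?_
      rw [integral_mul_const]
      have : (∫ y in Sᶜ, K y) ≤ 1 := by
        rw [← hKint]
        apply setIntegral_le_integral hKi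
        filter_upwards with y using hKnonneg y
      calc (∫ y in Sᶜ, K y) * (h * y₀ / d ^ 2) ≤ 1 * (h * y₀ / d ^ 2) :=
            mul_le_mul_of_nonneg_right this (by positivity)
        _ = h * y₀ / d ^ 2 := by ring
    linarith
  -- outer integrability
  have fmeas : AEStronglyMeasurable
      (fun l : ℝ => ∫ y : ℝ, (K y : ℂ) * ((l : ℂ) + ↑y * ↑h - z)⁻¹) μ := by
    apply StronglyMeasurable.aestronglyMeasurable
    apply StronglyMeasurable.integral_prod_right'
      (f := fun p : ℝ × ℝ => (K p.2 : ℂ) * ((p.1 : ℂ) + ↑p.2 * ↑h - z)⁻¹)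
    apply Measurable.stronglyMeasurable
    apply (Complex.measurable_ofReal.comp (hKmeas.comp measurable_snd)).mul
    exact (((Complex.measurable_ofReal.comp measurable_fst).add
      ((Complex.measurable_ofReal.comp measurable_snd).mul measurable_const)).sub
      measurable_const).inv
  have fint : Integrable
      (fun l : ℝ => ∫ y : ℝ, (K y : ℂ) * ((l : ℂ) + ↑y * ↑h - z)⁻¹) μ := by
    apply (integrable_const (1 / d : ℝ)).mono' fmeas
    filter_upwards with l
    calc ‖∫ y : ℝ, (K y : ℂ) * ((l : ℂ) + ↑y * ↑h - z)⁻¹‖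
        ≤ ∫ y : ℝ, K y * (1 / d) := by
          apply norm_integral_le_of_norm_le (hKi.mul_const _)
          filter_upwards with y
          rw [norm_mul, Complex.norm_real, Real.norm_eq_abs, _root_.abs_of_nonneg (hKnonneg y)]
          exact mul_le_mul_of_nonneg_left (binva l y) (hKnonneg y)
      _ = 1 / d := by rw [integral_mul_const, hKint, one_mul]
  have gint : Integrable (fun l : ℝ => ((l : ℂ) - z)⁻¹) μ := by
    apply (integrable_const (1 / d : ℝ)).mono'
    · exact ((Complex.measurable_ofReal.sub measurable_const).inv).aestronglyMeasurable
    · filter_upwards with l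
      exact binvb l
  rw [← integral_sub fint gint]
  have := norm_integral_le_of_norm_le_const (μ := μ)
    (f := fun l : ℝ => (∫ y : ℝ, (K y : ℂ) * ((l : ℂ) + ↑y * ↑h - z)⁻¹) - ((l : ℂ) - z)⁻¹)
    (C := 2 * ε / d + h * y₀ / d ^ 2) (Filter.Eventually.of_forall keybound)
  simpa using this
end

section
/- For two n × n real symmetric matrices A and B, the Lévy distance L between their empirical spectral distributions satisfies L^3(F^A, F^B) ≤ (1/n) tr((A − B)^2). -/
open MeasureTheory Finset

/-- Lévy distance between two distribution functions. -/
noncomputable def levyDist (F G : ℝ → ℝ) : ℝ :=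
  sInf {ε : ℝ | 0 < ε ∧ ∀ x, F (x - ε) - ε ≤ G x ∧ G x ≤ F (x + ε) + ε}

/-- Empirical spectral distribution function of a Hermitian matrix. -/
noncomputable def esd {n : ℕ} {A : Matrix (Fin n) (Fin n) ℝ}
    (hA : A.IsHermitian) (x : ℝ) : ℝ :=
  (univ.filter fun i => hA.eigenvalues i ≤ x).card / n

section aux

open Matrix


lemma trace_mul_eq_sum {n : ℕ} {A B : Matrix (Fin n) (Fin n) ℝ}
    (hA : A.IsHermitian) (hB : B.IsHermitian) :
    (A * B).trace = ∑ i, ∑ j, hA.eigenvalues i * hB.eigenvalues j *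
      ((star (hA.eigenvectorUnitary : Matrix (Fin n) (Fin n) ℝ) *
        (hB.eigenvectorUnitary : Matrix (Fin n) (Fin n) ℝ)) i j) ^ 2 := by
  set U : Matrix (Fin n) (Fin n) ℝ := (hA.eigenvectorUnitary : Matrix (Fin n) (Fin n) ℝ) with hU
  set V : Matrix (Fin n) (Fin n) ℝ := (hB.eigenvectorUnitary : Matrix (Fin n) (Fin n) ℝ) with hV
  have hdA : diagonal (RCLike.ofReal ∘ hA.eigenvalues) = diagonal hA.eigenvalues := by
    simp [RCLike.ofReal_real_eq_id]
  have hdB : diagonal (RCLike.ofReal ∘ hB.eigenvalues) = diagonal hB.eigenvalues := by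
    simp [RCLike.ofReal_real_eq_id]
  have hAe : A = U * diagonal hA.eigenvalues * star U := by
    rw [← hdA]; exact hA.spectral_theorem
  have hBe : B = V * diagonal hB.eigenvalues * star V := by
    rw [← hdB]; exact hB.spectral_theorem
  have key2 : star (star U * V) = star V * U := by
    rw [Matrix.star_mul, star_star]
  have key : (A * B).trace =
      (diagonal hA.eigenvalues * (star U * V) * diagonal hB.eigenvalues * star (star U * V)).trace := by
    rw [key2]
    conv_lhs => rw [hAe, hBe]
    rw [show (U * diagonal hA.eigenvalues * star U) * (V * diagonal hB.eigenvalues * star V)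
        = U * (diagonal hA.eigenvalues * star U * V * diagonal hB.eigenvalues * star V) from by
      simp only [Matrix.mul_assoc]]
    rw [trace_mul_comm]
    simp only [Matrix.mul_assoc]
  rw [key]
  set W : Matrix (Fin n) (Fin n) ℝ := star U * V with hWdef
  simp only [Matrix.trace, Matrix.diag_apply]
  refine Finset.sum_congr rfl fun i _ => ?_
  rw [Matrix.mul_apply]
  refine Finset.sum_congr rfl fun j _ => ?_
  rw [Matrix.mul_diagonal, Matrix.diagonal_mul, Matrix.star_apply, star_trivial]
  ring


lemma sq_mem_doublyStochastic {n : ℕ} {W : Matrix (Fin n) (Fin n) ℝ}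
    (hW : W ∈ Matrix.unitaryGroup (Fin n) ℝ) :
    Matrix.of (fun i j => (W i j) ^ 2) ∈ doublyStochastic ℝ (Fin n) := by
  have h1 : W * star W = 1 := Matrix.mem_unitaryGroup_iff.mp hW
  have h2 : star W * W = 1 := Matrix.mem_unitaryGroup_iff'.mp hW
  rw [mem_doublyStochastic_iff_sum]
  refine ⟨fun i j => sq_nonneg _, fun i => ?_, fun j => ?_⟩
  · have := congrArg (fun M => M i i) h1
    simpa [Matrix.mul_apply, Matrix.star_apply, star_trivial, Matrix.one_apply, sq] using this
  · have := congrArg (fun M => M j j) h2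
    simpa [Matrix.mul_apply, Matrix.star_apply, star_trivial, Matrix.one_apply, sq] using this


lemma sum_mul_perm_le_sorted {n : ℕ} (f g : Fin n → ℝ) (σ : Equiv.Perm (Fin n)) :
    ∑ i, f i * g (σ i) ≤ ∑ i, (f ∘ Tuple.sort f) i * (g ∘ Tuple.sort g) i := by
  have h1 : ∑ i, f i * g (σ i)
      = ∑ i, (f ∘ Tuple.sort f) i
          * ((g ∘ Tuple.sort g) ∘ ((Tuple.sort g)⁻¹ * σ * Tuple.sort f)) i := by
    rw [← Equiv.sum_comp (Tuple.sort f) (fun i => f i * g (σ i))]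
    refine sum_congr rfl fun i _ => ?_
    simp [Equiv.Perm.mul_apply]
  rw [h1]
  exact ((Tuple.monotone_sort f).monovary (Tuple.monotone_sort g)).sum_mul_comp_perm_le_sum_mul

lemma trace_mul_le_sum_sorted {n : ℕ} {A B : Matrix (Fin n) (Fin n) ℝ}
    (hA : A.IsHermitian) (hB : B.IsHermitian) :
    (A * B).trace ≤ ∑ i, (hA.eigenvalues ∘ Tuple.sort hA.eigenvalues) i *
      (hB.eigenvalues ∘ Tuple.sort hB.eigenvalues) i := by
  set U : Matrix (Fin n) (Fin n) ℝ := (hA.eigenvectorUnitary : Matrix (Fin n) (Fin n) ℝ) with hU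
  set V : Matrix (Fin n) (Fin n) ℝ := (hB.eigenvectorUnitary : Matrix (Fin n) (Fin n) ℝ) with hV
  set W : Matrix (Fin n) (Fin n) ℝ := star U * V with hWdef
  have hUU : U * star U = 1 := Matrix.mem_unitaryGroup_iff.mp hA.eigenvectorUnitary.2
  have hUU' : star U * U = 1 := Matrix.mem_unitaryGroup_iff'.mp hA.eigenvectorUnitary.2
  have hVV : V * star V = 1 := Matrix.mem_unitaryGroup_iff.mp hB.eigenvectorUnitary.2
  have hWmem : W ∈ Matrix.unitaryGroup (Fin n) ℝ := by
    rw [Matrix.mem_unitaryGroup_iff]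
    rw [hWdef, Matrix.star_mul, star_star]
    calc star U * V * (star V * U) = star U * (V * star V) * U := by
          simp only [Matrix.mul_assoc]
      _ = 1 := by rw [hVV, Matrix.mul_one, hUU']
  obtain ⟨w, hw0, hw1, hw2⟩ :=
    exists_eq_sum_perm_of_mem_doublyStochastic (sq_mem_doublyStochastic hWmem)
  have hS : ∀ i j, (W i j) ^ 2 = ∑ σ : Equiv.Perm (Fin n), w σ * σ.permMatrix ℝ i j := by
    intro i j
    conv_lhs => rw [show (W i j) ^ 2 = Matrix.of (fun i j => (W i j) ^ 2) i j from rfl, ← hw2]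
    rw [Matrix.sum_apply]
    exact Finset.sum_congr rfl fun σ _ => by rw [Matrix.smul_apply, smul_eq_mul]
  rw [trace_mul_eq_sum hA hB]
  have step : ∑ i, ∑ j, hA.eigenvalues i * hB.eigenvalues j * (W i j) ^ 2
      = ∑ σ : Equiv.Perm (Fin n), w σ * ∑ i, hA.eigenvalues i * hB.eigenvalues (σ i) := by
    have e1 : ∀ i, (∑ j, hA.eigenvalues i * hB.eigenvalues j * (W i j) ^ 2)
        = ∑ σ : Equiv.Perm (Fin n), ∑ j,
            hA.eigenvalues i * hB.eigenvalues j * (w σ * σ.permMatrix ℝ i j) := by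
      intro i
      rw [← Finset.sum_comm]
      exact Finset.sum_congr rfl fun j _ => by rw [hS i j, Finset.mul_sum]
    calc ∑ i, ∑ j, hA.eigenvalues i * hB.eigenvalues j * (W i j) ^ 2
        = ∑ i, ∑ σ : Equiv.Perm (Fin n), ∑ j,
            hA.eigenvalues i * hB.eigenvalues j * (w σ * σ.permMatrix ℝ i j) :=
          Finset.sum_congr rfl fun i _ => e1 i
      _ = ∑ σ : Equiv.Perm (Fin n), ∑ i, ∑ j,
            hA.eigenvalues i * hB.eigenvalues j * (w σ * σ.permMatrix ℝ i j) :=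
          Finset.sum_comm
      _ = ∑ σ : Equiv.Perm (Fin n), w σ * ∑ i, hA.eigenvalues i * hB.eigenvalues (σ i) := by
          refine Finset.sum_congr rfl fun σ _ => ?_
          rw [Finset.mul_sum]
          refine Finset.sum_congr rfl fun i _ => ?_
          rw [Finset.sum_eq_single (σ i)]
          · simp only [Equiv.Perm.permMatrix, PEquiv.toMatrix_apply, Equiv.toPEquiv_apply,
              Option.mem_def, Option.some.injEq, if_pos rfl, if_true, mul_one]
            ring
          · intro j _ hj
            simp [Equiv.Perm.permMatrix, PEquiv.toMatrix_apply, Equiv.toPEquiv_apply,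
              Ne.symm hj]
          · simp
  rw [step]
  calc ∑ σ : Equiv.Perm (Fin n), w σ * ∑ i, hA.eigenvalues i * hB.eigenvalues (σ i)
      ≤ ∑ σ : Equiv.Perm (Fin n), w σ * ∑ i, (hA.eigenvalues ∘ Tuple.sort hA.eigenvalues) i *
          (hB.eigenvalues ∘ Tuple.sort hB.eigenvalues) i := by
        refine Finset.sum_le_sum fun σ _ => ?_
        exact mul_le_mul_of_nonneg_left (sum_mul_perm_le_sorted _ _ σ) (hw0 σ)
    _ = _ := by rw [← Finset.sum_mul, hw1, one_mul]

lemma trace_mul_self_eq {n : ℕ} {A : Matrix (Fin n) (Fin n) ℝ} (hA : A.IsHermitian) :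
    (A * A).trace = ∑ i, hA.eigenvalues i ^ 2 := by
  rw [trace_mul_eq_sum hA hA]
  have h1 : star (hA.eigenvectorUnitary : Matrix (Fin n) (Fin n) ℝ) *
      (hA.eigenvectorUnitary : Matrix (Fin n) (Fin n) ℝ) = 1 :=
    Matrix.mem_unitaryGroup_iff'.mp hA.eigenvectorUnitary.2
  rw [h1]
  refine Finset.sum_congr rfl fun i _ => ?_
  rw [Finset.sum_eq_single i]
  · simp [Matrix.one_apply, sq]
  · intro j _ hj; simp [Matrix.one_apply, Ne.symm hj]
  · simp

/-- Hoffman–Wielandt inequality (sorted form). -/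
lemma hoffman_wielandt {n : ℕ} {A B : Matrix (Fin n) (Fin n) ℝ}
    (hA : A.IsHermitian) (hB : B.IsHermitian) :
    ∑ i, ((hA.eigenvalues ∘ Tuple.sort hA.eigenvalues) i -
      (hB.eigenvalues ∘ Tuple.sort hB.eigenvalues) i) ^ 2 ≤ ((A - B) ^ 2).trace := by
  have hexp : (A - B) ^ 2 = A * A - A * B - (B * A - B * B) := by
    rw [sq]; noncomm_ring
  have htr : ((A - B) ^ 2).trace
      = (A * A).trace - (A * B).trace - (B * A).trace + (B * B).trace := by
    rw [hexp]; rw [Matrix.trace_sub, Matrix.trace_sub, Matrix.trace_sub]; ring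
  have hBA : (B * A).trace = (A * B).trace := Matrix.trace_mul_comm B A
  have hAA := trace_mul_self_eq hA
  have hBB := trace_mul_self_eq hB
  have hsortA : ∑ i, (hA.eigenvalues ∘ Tuple.sort hA.eigenvalues) i ^ 2
      = ∑ i, hA.eigenvalues i ^ 2 :=
    Equiv.sum_comp (Tuple.sort hA.eigenvalues) (fun i => hA.eigenvalues i ^ 2)
  have hsortB : ∑ i, (hB.eigenvalues ∘ Tuple.sort hB.eigenvalues) i ^ 2
      = ∑ i, hB.eigenvalues i ^ 2 :=
    Equiv.sum_comp (Tuple.sort hB.eigenvalues) (fun i => hB.eigenvalues i ^ 2)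
  have hmul := trace_mul_le_sum_sorted hA hB
  have hlhs : ∑ i, ((hA.eigenvalues ∘ Tuple.sort hA.eigenvalues) i -
      (hB.eigenvalues ∘ Tuple.sort hB.eigenvalues) i) ^ 2
      = ∑ i, hA.eigenvalues i ^ 2 + ∑ i, hB.eigenvalues i ^ 2
        - 2 * ∑ i, (hA.eigenvalues ∘ Tuple.sort hA.eigenvalues) i *
            (hB.eigenvalues ∘ Tuple.sort hB.eigenvalues) i := by
    rw [← hsortA, ← hsortB, ← Finset.sum_add_distrib, Finset.mul_sum, ← Finset.sum_sub_distrib]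
    exact Finset.sum_congr rfl fun i _ => by ring
  rw [hlhs, htr, hBA, hAA, hBB]
  linarith


lemma card_filter_le_card_filter_add {n : ℕ} {f g : Fin n → ℝ} {ε : ℝ} (hε : 0 < ε)
    (hsum : ∑ i, (f i - g i) ^ 2 < n * ε ^ 3)
    (P Q : Fin n → Prop) [DecidablePred P] [DecidablePred Q]
    (h : ∀ i, P i → ¬ Q i → ε ^ 2 ≤ (f i - g i) ^ 2) :
    ((univ.filter P).card : ℝ) ≤ (univ.filter Q).card + n * ε := by
  set S := univ.filter P \ univ.filter Q with hSdef
  have h1 : (univ.filter P).card ≤ S.card + (univ.filter Q).card :=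
    Finset.card_le_card_sdiff_add_card
  have h2 : (S.card : ℝ) * ε ^ 2 ≤ ∑ i ∈ S, (f i - g i) ^ 2 := by
    have := Finset.card_nsmul_le_sum S (fun i => (f i - g i) ^ 2) (ε ^ 2)
      (fun i hi => by
        rw [hSdef, Finset.mem_sdiff, Finset.mem_filter, Finset.mem_filter] at hi
        exact h i hi.1.2 (fun hq => hi.2 ⟨Finset.mem_univ i, hq⟩))
    simpa [nsmul_eq_mul] using this
  have h3 : ∑ i ∈ S, (f i - g i) ^ 2 ≤ ∑ i, (f i - g i) ^ 2 :=
    Finset.sum_le_sum_of_subset_of_nonneg (Finset.subset_univ S)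
      (fun i _ _ => sq_nonneg _)
  have h4 : (S.card : ℝ) * ε ^ 2 < (n * ε) * ε ^ 2 := by
    calc (S.card : ℝ) * ε ^ 2 ≤ ∑ i, (f i - g i) ^ 2 := h2.trans h3
      _ < n * ε ^ 3 := hsum
      _ = (n * ε) * ε ^ 2 := by ring
  have h5 : (S.card : ℝ) < n * ε := lt_of_mul_lt_mul_right h4 (sq_nonneg ε)
  have h6 : ((univ.filter P).card : ℝ) ≤ (S.card : ℝ) + (univ.filter Q).card := by
    exact_mod_cast Nat.cast_le.mpr h1
  linarith

lemma card_filter_comp_perm {n : ℕ} (p : Fin n → Prop) [DecidablePred p]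
    (σ : Equiv.Perm (Fin n)) :
    (univ.filter fun i => p (σ i)).card = (univ.filter p).card := by
  refine Finset.card_bij' (fun i _ => σ i) (fun j _ => σ.symm j) ?_ ?_ ?_ ?_
  · intro i hi; rw [Finset.mem_filter] at hi ⊢; exact ⟨Finset.mem_univ _, hi.2⟩
  · intro j hj; rw [Finset.mem_filter] at hj ⊢
    exact ⟨Finset.mem_univ _, by simpa using hj.2⟩
  · intro i _; simp
  · intro j _; simp

end aux

/-- For `n × n` real symmetric matrices `A` and `B`, the Lévy distance between
their empirical spectral distributions satisfies
`L³(F^A, F^B) ≤ (1/n) tr((A − B)²)`. -/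
theorem levyDist_cube_le_trace_sq {n : ℕ} (hn : 0 < n)
    (A B : Matrix (Fin n) (Fin n) ℝ)
    (hA : A.IsHermitian) (hB : B.IsHermitian) :
    levyDist (esd hA) (esd hB) ^ 3 ≤ (1 / n) * ((A - B) ^ 2).trace := by
  have hn' : (0 : ℝ) < n := by exact_mod_cast hn
  set f : Fin n → ℝ := hA.eigenvalues ∘ Tuple.sort hA.eigenvalues with hf
  set g : Fin n → ℝ := hB.eigenvalues ∘ Tuple.sort hB.eigenvalues with hg
  have hHW : ∑ i, (f i - g i) ^ 2 ≤ ((A - B) ^ 2).trace := hoffman_wielandt hA hB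
  set D : ℝ := (1 / n) * ((A - B) ^ 2).trace with hD
  have hT : ∑ i, (f i - g i) ^ 2 ≤ n * D := by
    rw [hD]; field_simp; linarith [hHW]
  have hD0 : 0 ≤ D := by
    have h0 : (0:ℝ) ≤ ∑ i, (f i - g i) ^ 2 := Finset.sum_nonneg fun i _ => sq_nonneg _
    nlinarith
  set r : ℝ := D ^ (((3:ℕ):ℝ)⁻¹) with hr
  have hr0 : 0 ≤ r := Real.rpow_nonneg hD0 _
  have hr3 : r ^ (3:ℕ) = D := Real.rpow_inv_natCast_pow hD0 (by norm_num)
  -- esd rewritten via sorted eigenvalues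
  have hesdA : ∀ y : ℝ, esd hA y = ((univ.filter fun i => f i ≤ y).card : ℝ) / n := by
    intro y
    rw [esd, hf]
    congr 2
    exact (card_filter_comp_perm (fun i => hA.eigenvalues i ≤ y) (Tuple.sort hA.eigenvalues)).symm
  have hesdB : ∀ y : ℝ, esd hB y = ((univ.filter fun i => g i ≤ y).card : ℝ) / n := by
    intro y
    rw [esd, hg]
    congr 2
    exact (card_filter_comp_perm (fun i => hB.eigenvalues i ≤ y) (Tuple.sort hB.eigenvalues)).symm
  have key : ∀ δ : ℝ, 0 < δ → (r + δ) ∈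
      {ε : ℝ | 0 < ε ∧ ∀ x, esd hA (x - ε) - ε ≤ esd hB x ∧ esd hB x ≤ esd hA (x + ε) + ε} := by
    intro δ hδ
    set ε : ℝ := r + δ with hε
    have hε0 : 0 < ε := by positivity
    have hlt : ∑ i, (f i - g i) ^ 2 < n * ε ^ 3 := by
      have h1 : r ^ (3:ℕ) < ε ^ (3:ℕ) :=
        pow_lt_pow_left₀ (by linarith) hr0 (by norm_num)
      have h2 : n * D < n * ε ^ 3 := by
        rw [← hr3]; exact (mul_lt_mul_iff_right₀ hn').mpr h1
      linarith
    refine ⟨hε0, fun x => ⟨?_, ?_⟩⟩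
    · have hcount := card_filter_le_card_filter_add hε0 hlt
        (fun i => f i ≤ x - ε) (fun i => g i ≤ x)
        (fun i hp hq => by
          push_neg at hq
          have h1 : ε ≤ g i - f i := by linarith
          nlinarith)
      rw [hesdA, hesdB]
      rw [div_sub' (ne_of_gt hn'), div_le_div_iff₀ hn' hn']
      nlinarith [hcount]
    · have hcount := card_filter_le_card_filter_add hε0 hlt
        (fun i => g i ≤ x) (fun i => f i ≤ x + ε)
        (fun i hp hq => by
          push_neg at hq
          have h1 : ε ≤ f i - g i := by linarith
          nlinarith)
      rw [hesdA, hesdB]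
      rw [div_add' _ _ _ (ne_of_gt hn'), div_le_div_iff₀ hn' hn']
      nlinarith [hcount]
  have hbdd : BddBelow {ε : ℝ | 0 < ε ∧ ∀ x, esd hA (x - ε) - ε ≤ esd hB x ∧
      esd hB x ≤ esd hA (x + ε) + ε} := ⟨0, fun y hy => hy.1.le⟩
  have hle : levyDist (esd hA) (esd hB) ≤ r := by
    refine le_of_forall_pos_le_add fun δ hδ => ?_
    exact csInf_le hbdd (key δ hδ)
  have h0 : 0 ≤ levyDist (esd hA) (esd hB) :=
    Real.sInf_nonneg fun y hy => hy.1.le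
  calc levyDist (esd hA) (esd hB) ^ 3 ≤ r ^ 3 := pow_le_pow_left₀ h0 hle 3
    _ = D := hr3
end

section
/- For two n × n real symmetric matrices A and B, the Kolmogorov (sup-norm) distance between their empirical spectral distributions satisfies ‖F^A − F^B‖_∞ ≤ rank(A − B)/n. -/
open MeasureTheory Finset

open MeasureTheory Finset Matrix Module
open scoped InnerProductSpace

variable {n : ℕ}

/-- coefficient vanishes outside the spanning index set -/
lemma coeff_zero_of_mem_span (u : OrthonormalBasis (Fin n) ℝ (EuclideanSpace ℝ (Fin n)))
    (S : Finset (Fin n)) {v : EuclideanSpace ℝ (Fin n)}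
    (hv : v ∈ Submodule.span ℝ (⇑u '' ↑S)) {i : Fin n} (hi : i ∉ S) :
    u.repr v i = 0 := by
  rw [u.repr_apply_apply]
  induction hv using Submodule.span_induction with
  | mem w hw =>
    obtain ⟨j, hj, rfl⟩ := hw
    exact u.orthonormal.2 (fun h => hi (h ▸ hj))
  | zero => simp
  | add w₁ w₂ _ _ h1 h2 => rw [inner_add_right, h1, h2, add_zero]
  | smul c w _ h => rw [inner_smul_right, h, mul_zero]

lemma quad_form_eq (A : Matrix (Fin n) (Fin n) ℝ) (hA : A.IsHermitian)
    (v : EuclideanSpace ℝ (Fin n)) :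
    ⟪v, Matrix.toEuclideanLin A v⟫_ℝ
      = ∑ i, hA.eigenvalues i * (hA.eigenvectorBasis.repr v i)^2 := by
  set u := hA.eigenvectorBasis
  have hsym : (Matrix.toEuclideanLin A).IsSymmetric :=
    Matrix.isHermitian_iff_isSymmetric.1 hA
  have hui : ∀ i, Matrix.toEuclideanLin A (u i) = hA.eigenvalues i • u i := by
    intro i
    apply (WithLp.equiv 2 (Fin n → ℝ)).injective
    simp [Matrix.ofLp_toEuclideanLin_apply]
    exact hA.mulVec_eigenvectorBasis i
  rw [← u.sum_inner_mul_inner v (Matrix.toEuclideanLin A v)]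
  refine Finset.sum_congr rfl fun i _ => ?_
  rw [← hsym (u i) v, hui i, real_inner_smul_left, u.repr_apply_apply,
    real_inner_comm (u i) v]
  ring

lemma norm_sq_eq_sum_repr (u : OrthonormalBasis (Fin n) ℝ (EuclideanSpace ℝ (Fin n)))
    (v : EuclideanSpace ℝ (Fin n)) :
    ⟪v, v⟫_ℝ = ∑ i, (u.repr v i)^2 := by
  rw [← u.sum_inner_mul_inner v v]
  refine Finset.sum_congr rfl fun i _ => ?_
  rw [u.repr_apply_apply, real_inner_comm (u i) v]
  ring

lemma finrank_span_image (u : OrthonormalBasis (Fin n) ℝ (EuclideanSpace ℝ (Fin n)))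
    (S : Finset (Fin n)) :
    finrank ℝ (Submodule.span ℝ (⇑u '' ↑S)) = S.card := by
  have li : LinearIndependent ℝ (fun i : (↑S : Set (Fin n)) => u i) :=
    u.orthonormal.linearIndependent.comp _ Subtype.coe_injective
  rw [Set.image_eq_range, finrank_span_eq_card li]
  simp

lemma mulVecLin_neg' (M : Matrix (Fin n) (Fin n) ℝ) :
    (-M).mulVecLin = -(M.mulVecLin) := by
  ext v i
  simp [Matrix.mulVecLin_apply, Matrix.neg_mulVec]

lemma rank_neg' (M : Matrix (Fin n) (Fin n) ℝ) : (-M).rank = M.rank := by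
  rw [Matrix.rank, Matrix.rank, mulVecLin_neg', LinearMap.range_neg]

lemma rank_add_finrank_ker (M : Matrix (Fin n) (Fin n) ℝ) :
    M.rank + finrank ℝ (LinearMap.ker (Matrix.toEuclideanLin M)) = n := by
  have h1 : M.rank = finrank ℝ (LinearMap.range (Matrix.toEuclideanLin M)) :=
    M.rank_eq_finrank_range_toLin (PiLp.basisFun 2 ℝ (Fin n)) (PiLp.basisFun 2 ℝ (Fin n))
  rw [h1, LinearMap.finrank_range_add_finrank_ker, finrank_euclideanSpace_fin]

lemma count_key (A B : Matrix (Fin n) (Fin n) ℝ) (hA : A.IsHermitian) (hB : B.IsHermitian)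
    (x : ℝ) :
    (univ.filter fun i => hA.eigenvalues i ≤ x).card ≤
      (univ.filter fun i => hB.eigenvalues i ≤ x).card + (A - B).rank := by
  classical
  set uA := hA.eigenvectorBasis with huA
  set uB := hB.eigenvectorBasis with huB
  set SA : Finset (Fin n) := univ.filter fun i => hA.eigenvalues i ≤ x with hSA
  set TB : Finset (Fin n) := univ.filter fun i => x < hB.eigenvalues i with hTB
  set V : Submodule ℝ (EuclideanSpace ℝ (Fin n)) := Submodule.span ℝ (⇑uA '' ↑SA) with hVdef
  set W : Submodule ℝ (EuclideanSpace ℝ (Fin n)) := Submodule.span ℝ (⇑uB '' ↑TB) with hWdef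
  set K : Submodule ℝ (EuclideanSpace ℝ (Fin n)) :=
    LinearMap.ker (Matrix.toEuclideanLin (A - B)) with hKdef
  have hdisj : Disjoint V (W ⊓ K) := by
    rw [Submodule.disjoint_def]
    intro v hV hWK
    rcases hWK with ⟨hW, hK⟩
    by_contra hv0
    have hAB : Matrix.toEuclideanLin A v = Matrix.toEuclideanLin B v := by
      have h0 := (LinearMap.mem_ker).1 hK
      rw [map_sub, LinearMap.sub_apply] at h0
      exact sub_eq_zero.1 h0
    have hle : ⟪v, Matrix.toEuclideanLin A v⟫_ℝ ≤ x * ⟪v, v⟫_ℝ := by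
      rw [quad_form_eq A hA v, norm_sq_eq_sum_repr uA v, Finset.mul_sum]
      refine Finset.sum_le_sum fun i _ => ?_
      by_cases hi : i ∈ SA
      · exact mul_le_mul_of_nonneg_right ((Finset.mem_filter.1 hi).2) (sq_nonneg _)
      · rw [coeff_zero_of_mem_span uA SA hV hi]; simp
    have hlt : x * ⟪v, v⟫_ℝ < ⟪v, Matrix.toEuclideanLin B v⟫_ℝ := by
      rw [quad_form_eq B hB v, norm_sq_eq_sum_repr uB v, Finset.mul_sum]
      have hex : ∃ i, uB.repr v i ≠ 0 := by
        by_contra h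
        push_neg at h
        apply hv0
        have h1 : uB.repr v = 0 := by ext i; exact h i
        have h2 : uB.repr v = uB.repr 0 := by simpa using h1
        simpa using uB.repr.injective h2
      obtain ⟨i0, hi0⟩ := hex
      have hi0T : i0 ∈ TB := by
        by_contra h
        exact hi0 (coeff_zero_of_mem_span uB TB hW h)
      refine Finset.sum_lt_sum (fun i _ => ?_) ⟨i0, Finset.mem_univ i0, ?_⟩
      · by_cases hi : i ∈ TB
        · exact mul_le_mul_of_nonneg_right (le_of_lt (Finset.mem_filter.1 hi).2) (sq_nonneg _)
        · rw [coeff_zero_of_mem_span uB TB hW hi]; simp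
      · have hpos : 0 < (uB.repr v i0)^2 := by positivity
        exact mul_lt_mul_of_pos_right (Finset.mem_filter.1 hi0T).2 hpos
    rw [hAB] at hle
    linarith
  have hVW : finrank ℝ V + finrank ℝ ↥(W ⊓ K) ≤ n := by
    have h := Submodule.finrank_add_finrank_le_of_disjoint hdisj
    rwa [finrank_euclideanSpace_fin] at h
  have hWK : finrank ℝ W + finrank ℝ K ≤ n + finrank ℝ ↥(W ⊓ K) := by
    have h1 := Submodule.finrank_sup_add_finrank_inf_eq W K
    have h2 : finrank ℝ ↥(W ⊔ K) ≤ n := by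
      have h3 := Submodule.finrank_le (W ⊔ K)
      rwa [finrank_euclideanSpace_fin] at h3
    omega
  have hV : finrank ℝ V = SA.card := finrank_span_image uA SA
  have hW : finrank ℝ W = TB.card := finrank_span_image uB TB
  have hK : (A - B).rank + finrank ℝ K = n := rank_add_finrank_ker _
  have hcompl : (univ.filter fun i => hB.eigenvalues i ≤ x).card + TB.card = n := by
    have h := Finset.card_filter_add_card_filter_not
      (s := (univ : Finset (Fin n))) (p := fun i => hB.eigenvalues i ≤ x)
    simpa [hTB, not_le, Finset.card_univ] using h
  omega


/-- For `n × n` real symmetric matrices `A` and `B`, the Kolmogorov distance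
between their empirical spectral distributions is bounded by
`rank(A − B)/n`. -/
theorem esd_sup_dist_le_rank {n : ℕ} (hn : 0 < n)
    (A B : Matrix (Fin n) (Fin n) ℝ)
    (hA : A.IsHermitian) (hB : B.IsHermitian) :
    ∀ x : ℝ, |esd hA x - esd hB x| ≤ (A - B).rank / n := by
  intro x
  have hn' : (0 : ℝ) < n := by exact_mod_cast hn
  set kA := (univ.filter fun i => hA.eigenvalues i ≤ x).card with hkA
  set kB := (univ.filter fun i => hB.eigenvalues i ≤ x).card with hkB
  have h1 : kA ≤ kB + (A - B).rank := count_key A B hA hB x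
  have h2 : kB ≤ kA + (A - B).rank := by
    have := count_key B A hB hA x
    rwa [show B - A = -(A - B) from (neg_sub A B).symm, rank_neg'] at this
  rw [esd, esd, abs_sub_le_iff]
  constructor <;> rw [div_sub_div_same, div_le_div_iff₀ hn' hn']
  · have h1' : (kA : ℝ) ≤ (kB : ℝ) + ((A - B).rank : ℝ) := by exact_mod_cast h1
    exact mul_le_mul_of_nonneg_right (by linarith) hn'.le
  · have h2' : (kB : ℝ) ≤ (kA : ℝ) + ((A - B).rank : ℝ) := by exact_mod_cast h2
    exact mul_le_mul_of_nonneg_right (by linarith) hn'.le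
end

section
/- If l(x) = E[|X|^2 1_{|X| ≤ x}] is slowly varying with E|X|^2 = ∞, E X = 0, and b_n = inf{x ≥ b+1 : n l(x) ≤ x^2}, then Var(X 1_{|X| ≤ b_n}) = l(b_n)(1 + o(1/n)) as n → ∞. -/
open MeasureTheory ProbabilityTheory Filter Asymptotics

namespace TVA

variable {Ω : Type*} [MeasureSpace Ω] [IsProbabilityMeasure (ℙ : Measure Ω)] {X : Ω → ℝ}

lemma meas_A (hX : Measurable X) (x : ℝ) : MeasurableSet {ω | |X ω| ≤ x} :=
  measurableSet_le hX.abs measurable_const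

lemma intOn_sq (hX : Measurable X) (x : ℝ) :
    IntegrableOn (fun ω => |X ω| ^ 2) {ω | |X ω| ≤ x} ℙ := by
  refine Integrable.mono' (integrable_const (x ^ 2))
    ((hX.abs.pow_const 2).aestronglyMeasurable.restrict) ?_
  filter_upwards [ae_restrict_mem (meas_A hX x)] with ω hω
  rw [Real.norm_eq_abs, abs_of_nonneg (by positivity)]
  exact pow_le_pow_left₀ (abs_nonneg _) hω 2

lemma intOn_abs (hX : Measurable X) (x : ℝ) :
    IntegrableOn (fun ω => |X ω|) {ω | |X ω| ≤ x} ℙ := by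
  refine Integrable.mono' (integrable_const x)
    (hX.abs.aestronglyMeasurable.restrict) ?_
  filter_upwards [ae_restrict_mem (meas_A hX x)] with ω hω
  rwa [Real.norm_eq_abs, abs_abs]

lemma intOn_X (hX : Measurable X) (x : ℝ) :
    IntegrableOn X {ω | |X ω| ≤ x} ℙ := by
  refine Integrable.mono' (integrable_const x) (hX.aestronglyMeasurable.restrict) ?_
  filter_upwards [ae_restrict_mem (meas_A hX x)] with ω hω
  rwa [Real.norm_eq_abs]

lemma l_mono (hX : Measurable X) (l : ℝ → ℝ)
    (hl : ∀ x : ℝ, l x = ∫ ω in {ω | |X ω| ≤ x}, |X ω| ^ 2 ∂ℙ) : Monotone l := by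
  intro x y hxy
  rw [hl x, hl y]
  refine setIntegral_mono_set (intOn_sq hX y) ?_ ?_
  · filter_upwards with ω using by positivity
  · filter_upwards with ω hω using le_trans hω hxy

lemma l_nonneg (hX : Measurable X) (l : ℝ → ℝ)
    (hl : ∀ x : ℝ, l x = ∫ ω in {ω | |X ω| ≤ x}, |X ω| ^ 2 ∂ℙ) (x : ℝ) : 0 ≤ l x := by
  rw [hl x]
  exact setIntegral_nonneg (meas_A hX x) fun ω _ => by positivity

end TVA
open MeasureTheory ProbabilityTheory Filter Asymptotics
set_option linter.unusedSectionVars false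

open TVA
namespace TVA2
variable {Ω : Type*} [MeasureSpace Ω] [IsProbabilityMeasure (ℙ : Measure Ω)] {X : Ω → ℝ}

lemma l_unbounded (hX : Measurable X) (l : ℝ → ℝ)
    (hl : ∀ x : ℝ, l x = ∫ ω in {ω | |X ω| ≤ x}, |X ω| ^ 2 ∂ℙ)
    (hinf : ¬ Integrable (fun ω => |X ω| ^ 2) ℙ)
    (M : ℝ) : ∃ x : ℝ, M ≤ l x := by
  by_contra hcon
  push_neg at hcon
  apply hinf
  have hmeasA : ∀ x : ℝ, MeasurableSet {ω | |X ω| ≤ x} :=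
    fun x => measurableSet_le hX.abs measurable_const
  refine ⟨(hX.abs.pow_const 2).aestronglyMeasurable, ?_⟩
  rw [hasFiniteIntegral_iff_ofReal (by filter_upwards with ω using by positivity)]
  have key : ∫⁻ ω, ENNReal.ofReal (|X ω| ^ 2) ∂ℙ
      = ⨆ n : ℕ, ∫⁻ ω in {ω | |X ω| ≤ (n : ℝ)}, ENNReal.ofReal (|X ω| ^ 2) ∂ℙ := by
    have h1 : ∀ n : ℕ, ∫⁻ ω in {ω | |X ω| ≤ (n : ℝ)}, ENNReal.ofReal (|X ω| ^ 2) ∂ℙ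
        = ∫⁻ ω, ({ω | |X ω| ≤ (n : ℝ)}.indicator fun ω => ENNReal.ofReal (|X ω| ^ 2)) ω ∂ℙ :=
      fun n => (lintegral_indicator (hmeasA _) _).symm
    simp_rw [h1]
    rw [← lintegral_iSup]
    · congr 1; funext ω
      refine le_antisymm ?_ (iSup_le fun n => Set.indicator_le_self _ _ ω)
      have hmem : ω ∈ {ω' | |X ω'| ≤ ((⌈|X ω|⌉₊ : ℕ) : ℝ)} := by
        show |X ω| ≤ _; exact Nat.le_ceil _
      calc ENNReal.ofReal (|X ω| ^ 2)
          = ({ω' | |X ω'| ≤ ((⌈|X ω|⌉₊ : ℕ) : ℝ)}.indicator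
              fun ω' => ENNReal.ofReal (|X ω'| ^ 2)) ω := (Set.indicator_of_mem hmem fun ω' => ENNReal.ofReal (|X ω'| ^ 2)).symm
        _ ≤ _ := le_iSup (fun n : ℕ => ({ω' | |X ω'| ≤ ((n : ℕ) : ℝ)}.indicator
              fun ω' => ENNReal.ofReal (|X ω'| ^ 2)) ω) ⌈|X ω|⌉₊
    · exact fun n => ((hX.abs.pow_const 2).ennreal_ofReal).indicator (hmeasA _)
    · intro n m hnm ω
      refine Set.indicator_le_indicator_of_subset (fun ω' hω' => ?_) (fun _ => zero_le) ω
      show |X ω'| ≤ _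
      exact le_trans hω' (by exact_mod_cast hnm)
  rw [key]
  refine lt_of_le_of_lt (iSup_le fun n => ?_) (ENNReal.ofReal_lt_top (r := M))
  rw [← ofReal_integral_eq_lintegral_ofReal (intOn_sq hX (n:ℝ))
    (by filter_upwards with ω using by positivity)]
  exact ENNReal.ofReal_le_ofReal (le_of_lt (by rw [← hl]; exact hcon _))

end TVA2
open MeasureTheory ProbabilityTheory Filter Asymptotics
set_option linter.unusedSectionVars false
open TVA
namespace TVA3
variable {Ω : Type*} [MeasureSpace Ω] [IsProbabilityMeasure (ℙ : Measure Ω)] {X : Ω → ℝ}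

-- growth of l along dyadic scales
lemma l_grow (l : ℝ → ℝ) (θ x₀ : ℝ) (hx₀ : 1 ≤ x₀)
    (hstep : ∀ y, x₀ ≤ y → l (2 * y) ≤ (1 + θ) * l y)
    (hln : ∀ y, 0 ≤ l y) (hθ : 0 ≤ θ)
    (x : ℝ) (hx : x₀ ≤ x) (k : ℕ) : l (2 ^ k * x) ≤ (1 + θ) ^ k * l x := by
  induction k with
  | zero => simp
  | succ k ih =>
    have hxpos : (0:ℝ) < x := lt_of_lt_of_le (by linarith) hx
    have h2k : x₀ ≤ 2 ^ k * x := le_trans hx (le_mul_of_one_le_left (le_of_lt hxpos) (one_le_pow₀ one_le_two))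
    calc l (2 ^ (k+1) * x) = l (2 * (2 ^ k * x)) := by ring_nf
      _ ≤ (1 + θ) * l (2 ^ k * x) := hstep _ h2k
      _ ≤ (1 + θ) * ((1 + θ) ^ k * l x) := by
          exact mul_le_mul_of_nonneg_left ih (by linarith)
      _ = (1 + θ) ^ (k+1) * l x := by ring

-- single annulus bound: y * ∫_{y<|X|≤2y} |X| ≤ l(2y) - l(y)
lemma annulus_bound (hX : Measurable X) (l : ℝ → ℝ)
    (hl : ∀ x : ℝ, l x = ∫ ω in {ω | |X ω| ≤ x}, |X ω| ^ 2 ∂ℙ)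
    (y : ℝ) (hy : 0 < y) :
    y * ∫ ω in {ω | |X ω| ≤ 2*y} \ {ω | |X ω| ≤ y}, |X ω| ∂ℙ ≤ l (2*y) - l y := by
  have hsub : {ω | |X ω| ≤ y} ⊆ {ω | |X ω| ≤ 2*y} := by
    intro ω hω
    simp only [Set.mem_setOf_eq] at *
    linarith
  have hmeast : MeasurableSet ({ω | |X ω| ≤ 2*y} \ {ω | |X ω| ≤ y}) :=
    (meas_A hX _).diff (meas_A hX _)
  have hint2 : IntegrableOn (fun ω => |X ω| ^ 2) ({ω | |X ω| ≤ 2*y} \ {ω | |X ω| ≤ y}) ℙ :=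
    (intOn_sq hX (2*y)).mono_set Set.diff_subset
  have hint1 : IntegrableOn (fun ω => |X ω|) ({ω | |X ω| ≤ 2*y} \ {ω | |X ω| ≤ y}) ℙ :=
    (intOn_abs hX (2*y)).mono_set Set.diff_subset
  have hsplit : l (2*y) - l y = ∫ ω in {ω | |X ω| ≤ 2*y} \ {ω | |X ω| ≤ y}, |X ω| ^ 2 ∂ℙ := by
    have huni : ∫ ω in {ω | |X ω| ≤ 2*y}, |X ω| ^ 2 ∂ℙ
        = (∫ ω in {ω | |X ω| ≤ y}, |X ω| ^ 2 ∂ℙ)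
          + ∫ ω in {ω | |X ω| ≤ 2*y} \ {ω | |X ω| ≤ y}, |X ω| ^ 2 ∂ℙ := by
      rw [← setIntegral_union (Set.disjoint_sdiff_right) hmeast (intOn_sq hX y) hint2,
        Set.union_diff_cancel hsub]
    rw [hl, hl]
    linarith
  rw [hsplit, ← integral_const_mul]
  refine setIntegral_mono_on (hint1.const_mul y) hint2 hmeast fun ω hω => ?_
  have h1 : y < |X ω| := lt_of_not_ge hω.2
  calc y * |X ω| ≤ |X ω| * |X ω| := mul_le_mul_of_nonneg_right (le_of_lt h1) (abs_nonneg _)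
    _ = |X ω| ^ 2 := (sq (|X ω|)).symm

-- dyadic sum bound
lemma dyadic_bound (hX : Measurable X) (l : ℝ → ℝ)
    (hl : ∀ x : ℝ, l x = ∫ ω in {ω | |X ω| ≤ x}, |X ω| ^ 2 ∂ℙ)
    (hln : ∀ y, 0 ≤ l y)
    (θ x₀ : ℝ) (hθ : 0 < θ) (hθ2 : θ ≤ 1/2) (hx₀ : 1 ≤ x₀)
    (hstep : ∀ y, x₀ ≤ y → l (2 * y) ≤ (1 + θ) * l y)
    (x : ℝ) (hx : x₀ ≤ x) (K : ℕ) :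
    ∫ ω in {ω | |X ω| ≤ 2 ^ K * x} \ {ω | |X ω| ≤ x}, |X ω| ∂ℙ
      ≤ (θ * l x / x) * ∑ k ∈ Finset.range K, ((1+θ)/2) ^ k := by
  have hxpos : (0:ℝ) < x := lt_of_lt_of_le (by linarith) hx
  induction K with
  | zero => simp
  | succ K ih =>
    have hmono : ∀ j k : ℕ, j ≤ k → {ω | |X ω| ≤ 2 ^ j * x} ⊆ {ω | |X ω| ≤ 2 ^ k * x} := by
      intro j k hjk ω hω
      exact le_trans hω (mul_le_mul_of_nonneg_right (pow_le_pow_right₀ one_le_two hjk) (le_of_lt hxpos))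
    have hsub0 : {ω | |X ω| ≤ x} ⊆ {ω | |X ω| ≤ 2 ^ K * x} := by
      intro ω hω
      exact le_trans hω (le_mul_of_one_le_left (le_of_lt hxpos) (one_le_pow₀ one_le_two))
    -- decompose the big annulus
    have hdecomp : {ω | |X ω| ≤ 2 ^ (K+1) * x} \ {ω | |X ω| ≤ x}
        = ({ω | |X ω| ≤ 2 ^ K * x} \ {ω | |X ω| ≤ x})
          ∪ ({ω | |X ω| ≤ 2 ^ (K+1) * x} \ {ω | |X ω| ≤ 2 ^ K * x}) := by
      rw [← Set.diff_union_diff_cancel (hmono K (K+1) (by omega)) hsub0, Set.union_comm]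
    have hdisj : Disjoint ({ω | |X ω| ≤ 2 ^ K * x} \ {ω | |X ω| ≤ x})
        ({ω | |X ω| ≤ 2 ^ (K+1) * x} \ {ω | |X ω| ≤ 2 ^ K * x}) :=
      Set.disjoint_of_subset_left Set.diff_subset Set.disjoint_sdiff_right
    rw [hdecomp, setIntegral_union hdisj ((meas_A hX _).diff (meas_A hX _))
      ((intOn_abs hX _).mono_set Set.diff_subset) ((intOn_abs hX _).mono_set Set.diff_subset)]
    -- new annulus bound
    have hy : (0:ℝ) < 2 ^ K * x := by positivity
    have hann := annulus_bound hX l hl (2 ^ K * x) hy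
    have h2 : (2:ℝ) * (2 ^ K * x) = 2 ^ (K+1) * x := by ring
    rw [h2] at hann
    have hgrow := l_grow l θ x₀ hx₀ hstep hln (le_of_lt hθ) x hx K
    have hstepK : l (2 ^ (K+1) * x) ≤ (1 + θ) * l (2 ^ K * x) := by
      have : x₀ ≤ 2 ^ K * x := le_trans hx (le_mul_of_one_le_left (le_of_lt hxpos) (one_le_pow₀ one_le_two))
      calc l (2 ^ (K+1) * x) = l (2 * (2 ^ K * x)) := by rw [h2]
        _ ≤ (1 + θ) * l (2 ^ K * x) := hstep _ this
    have hannlast : ∫ ω in {ω | |X ω| ≤ 2 ^ (K+1) * x} \ {ω | |X ω| ≤ 2 ^ K * x}, |X ω| ∂ℙ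
        ≤ (θ * l x / x) * ((1+θ)/2) ^ K := by
      have h3 : l (2 ^ (K+1) * x) - l (2 ^ K * x) ≤ θ * l (2 ^ K * x) := by linarith
      have h4 : l (2 ^ K * x) ≤ (1+θ) ^ K * l x := hgrow
      have h5 : ∫ ω in {ω | |X ω| ≤ 2 ^ (K+1) * x} \ {ω | |X ω| ≤ 2 ^ K * x}, |X ω| ∂ℙ
          ≤ θ * ((1+θ) ^ K * l x) / (2 ^ K * x) := by
        rw [le_div_iff₀ hy]
        calc (∫ ω in {ω | |X ω| ≤ 2 ^ (K+1) * x} \ {ω | |X ω| ≤ 2 ^ K * x}, |X ω| ∂ℙ) * (2 ^ K * x)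
            = (2 ^ K * x) * ∫ ω in {ω | |X ω| ≤ 2 ^ (K+1) * x} \ {ω | |X ω| ≤ 2 ^ K * x}, |X ω| ∂ℙ := by ring
          _ ≤ l (2 ^ (K+1) * x) - l (2 ^ K * x) := hann
          _ ≤ θ * l (2 ^ K * x) := h3
          _ ≤ θ * ((1+θ) ^ K * l x) := mul_le_mul_of_nonneg_left h4 (le_of_lt hθ)
      calc ∫ ω in {ω | |X ω| ≤ 2 ^ (K+1) * x} \ {ω | |X ω| ≤ 2 ^ K * x}, |X ω| ∂ℙ
          ≤ θ * ((1+θ) ^ K * l x) / (2 ^ K * x) := h5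
        _ = (θ * l x / x) * ((1+θ)/2) ^ K := by
            rw [div_pow]
            field_simp
    rw [Finset.sum_range_succ, mul_add]
    exact add_le_add ih hannlast

end TVA3
open MeasureTheory ProbabilityTheory Filter Asymptotics
set_option linter.unusedSectionVars false
open TVA TVA3
namespace TVA4
variable {Ω : Type*} [MeasureSpace Ω] [IsProbabilityMeasure (ℙ : Measure Ω)] {X : Ω → ℝ}

lemma geom_bound (θ : ℝ) (hθ : 0 < θ) (hθ2 : θ ≤ 1/2) (K : ℕ) :
    ∑ k ∈ Finset.range K, ((1+θ)/2) ^ k ≤ 4 := by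
  have hr0 : (0:ℝ) ≤ (1+θ)/2 := by linarith
  have hr1 : (1+θ)/2 < 1 := by linarith
  calc ∑ k ∈ Finset.range K, ((1+θ)/2) ^ k ≤ 1 / (1 - (1+θ)/2) := by
        rw [geom_sum_eq (by intro h; rw [h] at hr1; linarith : (1+θ)/2 ≠ 1) K]
        have hid : (((1+θ)/2) ^ K - 1)/((1+θ)/2 - 1) = (1 - ((1+θ)/2) ^ K)/(1 - (1+θ)/2) := by
          rw [div_eq_div_iff (by linarith) (by linarith)]
          ring
        rw [hid, div_le_div_iff₀ (by linarith) (by linarith)]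
        have hp : 0 ≤ ((1+θ)/2) ^ K := pow_nonneg hr0 K
        nlinarith
    _ ≤ 4 := by
        rw [div_le_iff₀ (by linarith)]
        linarith

lemma tail_bound (hX : Measurable X) (l : ℝ → ℝ)
    (hl : ∀ x : ℝ, l x = ∫ ω in {ω | |X ω| ≤ x}, |X ω| ^ 2 ∂ℙ)
    (hln : ∀ y, 0 ≤ l y)
    (θ x₀ : ℝ) (hθ : 0 < θ) (hθ2 : θ ≤ 1/2) (hx₀ : 1 ≤ x₀)
    (hstep : ∀ y, x₀ ≤ y → l (2 * y) ≤ (1 + θ) * l y)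
    (x : ℝ) (hx : x₀ ≤ x) :
    IntegrableOn (fun ω => |X ω|) {ω | |X ω| ≤ x}ᶜ ℙ ∧
    ∫ ω in {ω | |X ω| ≤ x}ᶜ, |X ω| ∂ℙ ≤ 4 * θ * (l x / x) := by
  have hxpos : (0:ℝ) < x := lt_of_lt_of_le (by linarith) hx
  have hB0 : 0 ≤ 4 * θ * (l x / x) := by
    have := hln x; positivity
  -- bound for each K
  have hTK : ∀ K : ℕ, ∫ ω in {ω | |X ω| ≤ 2 ^ K * x} \ {ω | |X ω| ≤ x}, |X ω| ∂ℙ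
      ≤ 4 * θ * (l x / x) := by
    intro K
    calc ∫ ω in {ω | |X ω| ≤ 2 ^ K * x} \ {ω | |X ω| ≤ x}, |X ω| ∂ℙ
        ≤ (θ * l x / x) * ∑ k ∈ Finset.range K, ((1+θ)/2) ^ k :=
          dyadic_bound hX l hl hln θ x₀ hθ hθ2 hx₀ hstep x hx K
      _ ≤ (θ * l x / x) * 4 := by
          refine mul_le_mul_of_nonneg_left (geom_bound θ hθ hθ2 K) ?_
          have := hln x; positivity
      _ = 4 * θ * (l x / x) := by ring
  -- lintegral over the complement
  have hmonoSet : Monotone fun K : ℕ => {ω | |X ω| ≤ 2 ^ K * x} \ {ω | |X ω| ≤ x} := by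
    intro j k hjk
    refine Set.diff_subset_diff_left fun ω hω => ?_
    simp only [Set.mem_setOf_eq] at *
    exact le_trans hω (mul_le_mul_of_nonneg_right (pow_le_pow_right₀ one_le_two hjk) (le_of_lt hxpos))
  have hcover : ⋃ K : ℕ, ({ω | |X ω| ≤ 2 ^ K * x} \ {ω | |X ω| ≤ x}) = {ω | |X ω| ≤ x}ᶜ := by
    ext ω
    simp only [Set.mem_iUnion, Set.mem_diff, Set.mem_compl_iff, Set.mem_setOf_eq]
    constructor
    · rintro ⟨K, _, h2⟩; exact h2
    · intro h
      obtain ⟨K, hK⟩ := pow_unbounded_of_one_lt |X ω| one_lt_two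
      refine ⟨K, le_trans (le_of_lt hK) ?_, h⟩
      exact le_mul_of_one_le_right (by positivity) hx₀ |>.trans (by nlinarith [pow_pos (zero_lt_two (α := ℝ)) K])
  have hmeasann : ∀ K : ℕ, MeasurableSet ({ω | |X ω| ≤ 2 ^ K * x} \ {ω | |X ω| ≤ x}) :=
    fun K => (meas_A hX _).diff (meas_A hX _)
  have hlin : ∫⁻ ω in {ω | |X ω| ≤ x}ᶜ, ENNReal.ofReal (|X ω|) ∂ℙ
      ≤ ENNReal.ofReal (4 * θ * (l x / x)) := by
    rw [← lintegral_indicator (meas_A hX x).compl]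
    have hind : ∀ ω, ({ω | |X ω| ≤ x}ᶜ.indicator fun ω => ENNReal.ofReal (|X ω|)) ω
        = ⨆ K : ℕ, (({ω | |X ω| ≤ 2 ^ K * x} \ {ω | |X ω| ≤ x}).indicator
            fun ω => ENNReal.ofReal (|X ω|)) ω := by
      intro ω
      rw [← hcover]
      refine le_antisymm ?_ (iSup_le fun K =>
        Set.indicator_le_indicator_of_subset
          (Set.subset_iUnion (fun K : ℕ => {ω | |X ω| ≤ 2 ^ K * x} \ {ω | |X ω| ≤ x}) K)
          (fun _ => zero_le) ω)
      by_cases hω : ω ∈ ⋃ K : ℕ, ({ω | |X ω| ≤ 2 ^ K * x} \ {ω | |X ω| ≤ x})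
      · obtain ⟨K, hK⟩ := Set.mem_iUnion.mp hω
        rw [Set.indicator_of_mem hω]
        calc ENNReal.ofReal (|X ω|)
            = (({ω | |X ω| ≤ 2 ^ K * x} \ {ω | |X ω| ≤ x}).indicator
                fun ω => ENNReal.ofReal (|X ω|)) ω :=
              (Set.indicator_of_mem hK fun ω' => ENNReal.ofReal (|X ω'|)).symm
          _ ≤ _ := le_iSup (fun K : ℕ => (({ω' | |X ω'| ≤ 2 ^ K * x} \ {ω' | |X ω'| ≤ x}).indicator
                fun ω' => ENNReal.ofReal (|X ω'|)) ω) K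
      · rw [Set.indicator_of_notMem hω]; exact zero_le
    calc ∫⁻ ω, ({ω | |X ω| ≤ x}ᶜ.indicator fun ω => ENNReal.ofReal (|X ω|)) ω ∂ℙ
        = ∫⁻ ω, ⨆ K : ℕ, (({ω | |X ω| ≤ 2 ^ K * x} \ {ω | |X ω| ≤ x}).indicator
            fun ω => ENNReal.ofReal (|X ω|)) ω ∂ℙ := by
          congr 1; funext ω; exact hind ω
      _ = ⨆ K : ℕ, ∫⁻ ω, (({ω | |X ω| ≤ 2 ^ K * x} \ {ω | |X ω| ≤ x}).indicator
            fun ω => ENNReal.ofReal (|X ω|)) ω ∂ℙ := by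
          refine lintegral_iSup (fun K => (hX.abs.ennreal_ofReal).indicator (hmeasann K)) ?_
          intro j k hjk ω
          exact Set.indicator_le_indicator_of_subset (hmonoSet hjk) (fun _ => zero_le) ω
      _ ≤ ENNReal.ofReal (4 * θ * (l x / x)) := by
          refine iSup_le fun K => ?_
          rw [lintegral_indicator (hmeasann K)]
          rw [← ofReal_integral_eq_lintegral_ofReal
            ((intOn_abs hX (2 ^ K * x)).mono_set Set.diff_subset)
            (by filter_upwards with ω using abs_nonneg _)]
          exact ENNReal.ofReal_le_ofReal (hTK K)
  have hfin : HasFiniteIntegral (fun ω => |X ω|) ((ℙ : Measure Ω).restrict {ω | |X ω| ≤ x}ᶜ) := by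
    rw [hasFiniteIntegral_iff_ofReal (by filter_upwards with ω using abs_nonneg _)]
    exact lt_of_le_of_lt hlin ENNReal.ofReal_lt_top
  have hione : IntegrableOn (fun ω => |X ω|) {ω | |X ω| ≤ x}ᶜ ℙ :=
    ⟨hX.abs.aestronglyMeasurable.restrict, hfin⟩
  refine ⟨hione, ?_⟩
  rw [integral_eq_lintegral_of_nonneg_ae (by filter_upwards with ω using abs_nonneg _)
    hX.abs.aestronglyMeasurable.restrict]
  exact ENNReal.toReal_le_of_le_ofReal hB0 hlin

end TVA4
open MeasureTheory ProbabilityTheory Filter Asymptotics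
set_option linter.unusedSectionVars false
open TVA TVA3 TVA4
namespace TVA5
variable {Ω : Type*} [MeasureSpace Ω] [IsProbabilityMeasure (ℙ : Measure Ω)] {X : Ω → ℝ}

lemma integrable_X (hX : Measurable X) (x : ℝ) (hx : 0 < x)
    (htail : IntegrableOn (fun ω => |X ω|) {ω | |X ω| ≤ x}ᶜ ℙ) :
    Integrable X ℙ := by
  have h1 : IntegrableOn X {ω | |X ω| ≤ x} ℙ := intOn_X hX x
  have h2 : IntegrableOn X {ω | |X ω| ≤ x}ᶜ ℙ := by
    refine Integrable.mono' htail (hX.aestronglyMeasurable.restrict) ?_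
    filter_upwards with ω using le_of_eq (Real.norm_eq_abs _)
  have := h1.union h2
  rwa [Set.union_compl_self, integrableOn_univ] at this

lemma mean_bound (hX : Measurable X)
    (hmean : ∫ ω, X ω ∂ℙ = 0) (hint : Integrable X ℙ)
    (x B : ℝ)
    (htail : ∫ ω in {ω | |X ω| ≤ x}ᶜ, |X ω| ∂ℙ ≤ B) :
    |∫ ω in {ω | |X ω| ≤ x}, X ω ∂ℙ| ≤ B := by
  have hsplit := integral_add_compl (meas_A hX x) hint
  rw [hmean] at hsplit
  have : ∫ ω in {ω | |X ω| ≤ x}, X ω ∂ℙ = - ∫ ω in {ω | |X ω| ≤ x}ᶜ, X ω ∂ℙ := by linarith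
  rw [this, abs_neg]
  calc |∫ ω in {ω | |X ω| ≤ x}ᶜ, X ω ∂ℙ| ≤ ∫ ω in {ω | |X ω| ≤ x}ᶜ, |X ω| ∂ℙ := by
        have := norm_integral_le_integral_norm (μ := (ℙ : Measure Ω).restrict {ω | |X ω| ≤ x}ᶜ) X
        simpa [Real.norm_eq_abs] using this
    _ ≤ B := htail

end TVA5
open MeasureTheory ProbabilityTheory Filter Asymptotics
set_option linter.unusedSectionVars false
open TVA TVA3 TVA4 TVA5
namespace TVA6

theorem aux {Ω : Type*} [MeasureSpace Ω] [IsProbabilityMeasure (ℙ : Measure Ω)]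
    (X : Ω → ℝ) (hX : Measurable X)
    (hmean : ∫ ω, X ω ∂ℙ = 0)
    (l : ℝ → ℝ)
    (hl : ∀ x : ℝ, l x = ∫ ω in {ω | |X ω| ≤ x}, |X ω| ^ 2 ∂ℙ)
    (hslow : Tendsto (fun x => l (2 * x) / l x) atTop (nhds 1))
    (hinf : ¬ Integrable (fun ω => |X ω| ^ 2) ℙ)
    (b₀ : ℝ) (hb₀ : b₀ = sInf {x : ℝ | 0 < x ∧ 0 < l x})
    (b : ℕ → ℝ)
    (hb : ∀ n, b n = sInf {x : ℝ | b₀ + 1 ≤ x ∧ n * l x ≤ x ^ 2})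
    (V : ℕ → ℝ)
    (hV : ∀ n, V n = (∫ ω in {ω | |X ω| ≤ b n}, X ω ^ 2 ∂ℙ)
        - (∫ ω in {ω | |X ω| ≤ b n}, X ω ∂ℙ) ^ 2) :
    (fun n => V n - l (b n)) =o[atTop] (fun n => l (b n) / n) := by
  have hmono : Monotone l := l_mono hX l hl
  have hln : ∀ y, 0 ≤ l y := l_nonneg hX l hl
  have hub : ∀ M : ℝ, ∃ x, M ≤ l x := fun M => TVA2.l_unbounded hX l hl hinf M
  -- step property for any θ
  have hθx₀ : ∀ θ : ℝ, 0 < θ → ∃ x₀ : ℝ, 1 ≤ x₀ ∧ ∀ y, x₀ ≤ y → l (2 * y) ≤ (1 + θ) * l y := by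
    intro θ hθ
    obtain ⟨z, hz⟩ := hub 1
    have h1 : ∀ᶠ y in atTop, l (2 * y) / l y ≤ 1 + θ :=
      hslow.eventually (eventually_le_nhds (by linarith))
    have h2 : ∀ᶠ y : ℝ in atTop, z ≤ y := eventually_ge_atTop z
    obtain ⟨x₁, hx₁⟩ := (h1.and h2).exists_forall_of_atTop
    refine ⟨max x₁ 1, le_max_right _ _, fun y hy => ?_⟩
    have hy1 := (hx₁ y (le_trans (le_max_left _ _) hy)).1
    have hy2 := (hx₁ y (le_trans (le_max_left _ _) hy)).2
    have hly : 0 < l y := lt_of_lt_of_le one_pos (le_trans hz (hmono hy2))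
    rwa [div_le_iff₀ hly] at hy1
  -- b₀ ≥ 0
  have hS₀ne : {x : ℝ | 0 < x ∧ 0 < l x}.Nonempty := by
    obtain ⟨z, hz⟩ := hub 1
    exact ⟨max z 1, lt_of_lt_of_le one_pos (le_max_right _ _),
      lt_of_lt_of_le one_pos (le_trans hz (hmono (le_max_left _ _)))⟩
  have hb₀0 : 0 ≤ b₀ := by
    rw [hb₀]
    exact le_csInf hS₀ne fun x hx => le_of_lt hx.1
  -- l (b₀ + 1) > 0
  have hlb₀pos : 0 < l (b₀ + 1) := by
    obtain ⟨z, hz, hz2⟩ := exists_lt_of_csInf_lt hS₀ne (by rw [← hb₀]; linarith : sInf {x : ℝ | 0 < x ∧ 0 < l x} < b₀ + 1)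
    exact lt_of_lt_of_le hz.2 (hmono (le_of_lt hz2))
  -- nonemptiness of the sets defining b n
  have hSne : ∀ n : ℕ, {x : ℝ | b₀ + 1 ≤ x ∧ (n : ℝ) * l x ≤ x ^ 2}.Nonempty := by
    intro n
    obtain ⟨x₀, hx₀1, hstep⟩ := hθx₀ (1/2) (by norm_num)
    set c := max x₀ (b₀ + 1) with hc
    have hc1 : 1 ≤ c := le_trans hx₀1 (le_max_left _ _)
    have hcb : b₀ + 1 ≤ c := le_max_right _ _
    have hcpos : (0:ℝ) < c := lt_of_lt_of_le one_pos hc1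
    rcases eq_or_lt_of_le (hln c) with hlc | hlc
    · exact ⟨c, hcb, by rw [← hlc, mul_zero]; positivity⟩
    · rcases Nat.eq_zero_or_pos n with hn | hn
      · exact ⟨c, hcb, by rw [hn]; push_cast; rw [zero_mul]; positivity⟩
      · have hnl : (0:ℝ) < n * l c := by
          have : (0:ℝ) < n := by exact_mod_cast hn
          positivity
        obtain ⟨k, hk⟩ := exists_pow_lt_of_lt_one (show (0:ℝ) < c ^ 2 / (n * l c) by positivity)
          (show (3/8:ℝ) < 1 by norm_num)
        refine ⟨2 ^ k * c, le_trans hcb (le_mul_of_one_le_left (le_of_lt hcpos) (one_le_pow₀ one_le_two)), ?_⟩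
        have hgrow := l_grow l (1/2) x₀ hx₀1 hstep hln (by norm_num) c (le_max_left _ _) k
        have h38 : ((3:ℝ)/8) ^ k = (1 + 1/2) ^ k / 4 ^ k := by
          rw [← div_pow]
          norm_num
        have hprod : (4:ℝ)^k * (3/8)^k = (3/2)^k := by rw [← mul_pow]; norm_num
        have h4k : ((2:ℝ) ^ k * c) ^ 2 = 4 ^ k * c ^ 2 := by
          rw [mul_pow]
          congr 1
          rw [← pow_mul, mul_comm k 2, pow_mul]
          norm_num
        have hk' : (3/8:ℝ)^k * (↑n * l c) < c^2 := (lt_div_iff₀ hnl).mp hk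
        have hk2 : (3/8:ℝ)^k * (↑n * l c) * 4^k < c^2 * 4^k :=
          mul_lt_mul_of_pos_right hk' (by positivity)
        calc (n : ℝ) * l (2 ^ k * c) ≤ n * ((1 + 1/2) ^ k * l c) :=
              mul_le_mul_of_nonneg_left hgrow (Nat.cast_nonneg n)
          _ = (3/8)^k * (↑n * l c) * 4^k := by
              rw [show ((1:ℝ)+1/2) = 3/2 by norm_num, ← hprod]
              ring
          _ ≤ c^2 * 4^k := le_of_lt hk2
          _ = (2 ^ k * c) ^ 2 := by rw [h4k]; ring
  have hSbdd : ∀ n : ℕ, BddBelow {x : ℝ | b₀ + 1 ≤ x ∧ (n : ℝ) * l x ≤ x ^ 2} :=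
    fun n => ⟨b₀ + 1, fun x hx => hx.1⟩
  have hbnlb : ∀ n, b₀ + 1 ≤ b n := by
    intro n
    rw [hb n]
    exact le_csInf (hSne n) fun x hx => hx.1
  have hbnpos : ∀ n, 0 < b n := fun n => lt_of_lt_of_le (by linarith) (hbnlb n)
  have hlbn : ∀ n, 0 < l (b n) := fun n =>
    lt_of_lt_of_le hlb₀pos (hmono (hbnlb n))
  -- key inequality n * l (b n) ≤ (b n)^2
  have hkey : ∀ n : ℕ, (n : ℝ) * l (b n) ≤ (b n) ^ 2 := by
    intro n
    refine le_of_forall_pos_le_add fun ε hε => ?_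
    have hbn := hbnpos n
    set δ := min 1 (ε / (2 * b n + 1)) with hδdef
    have hδpos : 0 < δ := lt_min one_pos (by positivity)
    obtain ⟨x, hx, hxlt⟩ := exists_lt_of_csInf_lt (hSne n)
      (by rw [← hb n]; linarith : sInf {x : ℝ | b₀ + 1 ≤ x ∧ (n:ℝ) * l x ≤ x ^ 2} < b n + δ)
    have hbnx : b n ≤ x := by rw [hb n]; exact csInf_le (hSbdd n) hx
    have h1 : (n : ℝ) * l (b n) ≤ (n : ℝ) * l x :=
      mul_le_mul_of_nonneg_left (hmono hbnx) (Nat.cast_nonneg n)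
    have h2 : (n : ℝ) * l x ≤ x ^ 2 := hx.2
    have h3 : x ^ 2 ≤ (b n + δ) ^ 2 := by nlinarith
    have h4 : (b n + δ) ^ 2 ≤ (b n) ^ 2 + ε := by
      have hd1 : δ ≤ 1 := min_le_left _ _
      have hd2 : δ ≤ ε / (2 * b n + 1) := min_le_right _ _
      have : δ * (2 * b n + 1) ≤ ε :=
        (le_div_iff₀ (by positivity : (0:ℝ) < 2 * b n + 1)).mp hd2
      nlinarith
    linarith
  -- b n → ∞
  have hbtop : Tendsto b atTop atTop := by
    rw [tendsto_atTop]
    intro M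
    set M' := max M (b₀ + 1) with hM'
    have hM'pos : 0 < M' := lt_of_lt_of_le (by linarith) (le_max_right _ _)
    obtain ⟨N, hN⟩ := exists_nat_ge (M' ^ 2 / l (b₀ + 1))
    filter_upwards [eventually_ge_atTop N] with n hn
    have hnM : M' ^ 2 ≤ (n : ℝ) * l (b₀ + 1) := by
      rw [div_le_iff₀ hlb₀pos] at hN
      have : (N : ℝ) ≤ (n : ℝ) := by exact_mod_cast hn
      nlinarith
    refine le_trans (le_max_left M (b₀+1)) ?_
    rw [hb n]
    refine le_csInf (hSne n) fun x hx => ?_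
    by_contra hcon
    push_neg at hcon
    have hxpos : 0 < x := lt_of_lt_of_le (by linarith) hx.1
    have hlx : l (b₀ + 1) ≤ l x := hmono hx.1
    have : (n:ℝ) * l (b₀ + 1) ≤ (n:ℝ) * l x :=
      mul_le_mul_of_nonneg_left hlx (Nat.cast_nonneg n)
    nlinarith [hx.2]
  -- final assembly
  rw [isLittleO_iff]
  intro ε hε
  set θ := min (1/2) (Real.sqrt ε / 4) with hθdef
  have hθpos : 0 < θ := lt_min (by norm_num) (by positivity)
  have hθhalf : θ ≤ 1/2 := min_le_left _ _
  have hθε : 16 * θ ^ 2 ≤ ε := by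
    have h1 : θ ≤ Real.sqrt ε / 4 := min_le_right _ _
    have h2 : θ ^ 2 ≤ (Real.sqrt ε / 4) ^ 2 := by
      exact pow_le_pow_left₀ (le_of_lt hθpos) h1 2
    have h3 : (Real.sqrt ε / 4) ^ 2 = ε / 16 := by
      rw [div_pow, Real.sq_sqrt (le_of_lt hε)]
      norm_num
    linarith
  obtain ⟨x₀, hx₀1, hstep⟩ := hθx₀ θ hθpos
  have hintX : Integrable X ℙ := by
    refine integrable_X hX x₀ (by linarith) ?_
    exact (tail_bound hX l hl hln θ x₀ hθpos hθhalf hx₀1 hstep x₀ le_rfl).1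
  filter_upwards [hbtop.eventually (eventually_ge_atTop x₀), eventually_ge_atTop 1] with n hbx₀ hn1
  -- rewrite V n - l (b n)
  have hVn : V n - l (b n) = - (∫ ω in {ω | |X ω| ≤ b n}, X ω ∂ℙ) ^ 2 := by
    rw [hV n, hl (b n)]
    have : ∫ ω in {ω | |X ω| ≤ b n}, X ω ^ 2 ∂ℙ = ∫ ω in {ω | |X ω| ≤ b n}, |X ω| ^ 2 ∂ℙ := by
      refine integral_congr_ae ?_
      filter_upwards with ω using (sq_abs (X ω)).symm
    rw [this]
    ring
  have hμ : |∫ ω in {ω | |X ω| ≤ b n}, X ω ∂ℙ| ≤ 4 * θ * (l (b n) / b n) :=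
    mean_bound hX hmean hintX (b n) _
      (tail_bound hX l hl hln θ x₀ hθpos hθhalf hx₀1 hstep (b n) hbx₀).2
  have hbn := hbnpos n
  have hlb := hlbn n
  have hnpos : (0:ℝ) < n := by exact_mod_cast hn1
  have hμ2 : (∫ ω in {ω | |X ω| ≤ b n}, X ω ∂ℙ) ^ 2 ≤ (4 * θ * (l (b n) / b n)) ^ 2 := by
    rw [← sq_abs]
    exact pow_le_pow_left₀ (abs_nonneg _) hμ 2
  have hfinal : (4 * θ * (l (b n) / b n)) ^ 2 ≤ ε * (l (b n) / n) := by
    have hbn' : b n ≠ 0 := ne_of_gt hbn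
    have hexp : (4 * θ * (l (b n) / b n)) ^ 2 = (16 * θ ^ 2 * l (b n) ^ 2) / (b n) ^ 2 := by
      field_simp
      ring
    have hexp2 : ε * (l (b n) / n) = (ε * l (b n)) / n := by ring
    rw [hexp, hexp2, div_le_div_iff₀ (by positivity) hnpos]
    nlinarith [mul_le_mul_of_nonneg_left (hkey n) (by positivity : (0:ℝ) ≤ ε * l (b n)),
      mul_le_mul_of_nonneg_right hθε (by positivity : (0:ℝ) ≤ (n:ℝ) * l (b n) ^ 2)]
  calc ‖V n - l (b n)‖ = (∫ ω in {ω | |X ω| ≤ b n}, X ω ∂ℙ) ^ 2 := by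
        rw [hVn, norm_neg, Real.norm_eq_abs, abs_of_nonneg (by positivity)]
    _ ≤ ε * (l (b n) / n) := le_trans hμ2 hfinal
    _ = ε * ‖l (b n) / n‖ := by
        rw [Real.norm_eq_abs, abs_of_nonneg (by positivity)]

end TVA6
open MeasureTheory ProbabilityTheory Filter Asymptotics

/-- If `l(x) = E[|X|² 1_{|X| ≤ x}]` is slowly varying with `E|X|² = ∞`,
`E X = 0`, and `b_n = inf{x ≥ b+1 : n l(x) ≤ x²}`, then
`Var(X 1_{|X| ≤ b_n}) = l(b_n)(1 + o(1/n))` as `n → ∞`. -/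
theorem truncated_variance_asymptotics
    {Ω : Type*} [MeasureSpace Ω] [IsProbabilityMeasure (ℙ : Measure Ω)]
    (X : Ω → ℝ) (hX : AEMeasurable X ℙ)
    (hmean : ∫ ω, X ω ∂ℙ = 0)
    (l : ℝ → ℝ)
    (hl : ∀ x : ℝ, l x = ∫ ω in {ω | |X ω| ≤ x}, |X ω| ^ 2 ∂ℙ)
    (hslow : ∀ c : ℝ, 0 < c → Tendsto (fun x => l (c * x) / l x) atTop (nhds 1))
    (hinf : ¬ Integrable (fun ω => |X ω| ^ 2) ℙ)
    (b₀ : ℝ) (hb₀ : b₀ = sInf {x : ℝ | 0 < x ∧ 0 < l x})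
    (b : ℕ → ℝ)
    (hb : ∀ n, b n = sInf {x : ℝ | b₀ + 1 ≤ x ∧ n * l x ≤ x ^ 2})
    (V : ℕ → ℝ)
    (hV : ∀ n, V n = (∫ ω in {ω | |X ω| ≤ b n}, X ω ^ 2 ∂ℙ)
        - (∫ ω in {ω | |X ω| ≤ b n}, X ω ∂ℙ) ^ 2) :
    (fun n => V n - l (b n)) =o[atTop] (fun n => l (b n) / n) := by
  set X' := hX.mk X with hX'def
  have hX'm : Measurable X' := hX.measurable_mk
  have heq : X =ᵐ[ℙ] X' := hX.ae_eq_mk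
  have hseteq : ∀ x : ℝ, {ω | |X ω| ≤ x} =ᵐ[ℙ] {ω | |X' ω| ≤ x} := by
    intro x
    rw [eventuallyEq_set]
    filter_upwards [heq] with ω hω
    simp only [Set.mem_setOf_eq, hω]
  have hsetint : ∀ (x : ℝ) (f g : Ω → ℝ), (f =ᵐ[ℙ] g) →
      ∫ ω in {ω | |X ω| ≤ x}, f ω ∂ℙ = ∫ ω in {ω | |X' ω| ≤ x}, g ω ∂ℙ := by
    intro x f g hfg
    rw [setIntegral_congr_set (hseteq x)]
    exact integral_congr_ae (ae_restrict_of_ae hfg)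
  have hmean' : ∫ ω, X' ω ∂ℙ = 0 := by rw [← integral_congr_ae heq]; exact hmean
  have hl' : ∀ x : ℝ, l x = ∫ ω in {ω | |X' ω| ≤ x}, |X' ω| ^ 2 ∂ℙ := by
    intro x
    rw [hl x]
    exact hsetint x _ _ (heq.mono fun ω hω => by simp only [hω])
  have hinf' : ¬ Integrable (fun ω => |X' ω| ^ 2) ℙ := by
    intro hcon
    exact hinf ((integrable_congr (heq.mono fun ω hω => by simp only [hω])).mpr hcon)
  have hV' : ∀ n, V n = (∫ ω in {ω | |X' ω| ≤ b n}, X' ω ^ 2 ∂ℙ)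
      - (∫ ω in {ω | |X' ω| ≤ b n}, X' ω ∂ℙ) ^ 2 := by
    intro n
    rw [hV n, hsetint (b n) _ _ (heq.mono fun ω hω => by simp only [hω] : (fun ω => X ω ^ 2) =ᵐ[ℙ] fun ω => X' ω ^ 2),
      hsetint (b n) _ _ heq]
  exact TVA6.aux X' hX'm hmean' l hl' (hslow 2 two_pos) hinf' b₀ hb₀ b hb V hV'
end

section
/- Let Y_n be random variables of the form Y_n = [Var(X 1_{|X| ≤ b_n})]^{-1/2}(X 1_{|X| ≤ b_n} − E[X 1_{|X| ≤ b_n}]), where E X = 0, l(x) = E[|X|² 1_{|X| ≤ x}] is slowly varying, E|X|² = ∞, and b_n = inf{x ≥ b+1 : n l(x) ≤ x²}. Then for every η > 0, E[|Y_n|² 1_{|Y_n| > η √n}] → 0 as n → ∞. -/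
open MeasureTheory ProbabilityTheory Filter Asymptotics

noncomputable def truncAux {Ω : Type*} (Z : Ω → ℝ) (c : ℝ) : Ω → ℝ :=
  fun ω => if |Z ω| ≤ c then Z ω else 0

set_option maxHeartbeats 1000000 in
theorem lindeberg_main
    {Ω : Type*} [MeasureSpace Ω] [IsProbabilityMeasure (ℙ : Measure Ω)]
    (Z : Ω → ℝ) (hZ : Measurable Z)
    (hmean : ∫ ω, Z ω ∂ℙ = 0)
    (l : ℝ → ℝ)
    (hl : ∀ x : ℝ, l x = ∫ ω, truncAux Z x ω ^ 2 ∂ℙ)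
    (hslow : ∀ c : ℝ, 0 < c → Tendsto (fun x => l (c * x) / l x) atTop (nhds 1))
    (hinf : ¬ Integrable (fun ω => (Z ω) ^ 2) ℙ)
    (b₀ : ℝ) (hb₀ : b₀ = sInf {x : ℝ | 0 < x ∧ 0 < l x})
    (b : ℕ → ℝ)
    (hb : ∀ n, b n = sInf {x : ℝ | b₀ + 1 ≤ x ∧ n * l x ≤ x ^ 2})
    (m : ℕ → ℝ) (hm : ∀ n, m n = ∫ ω, truncAux Z (b n) ω ∂ℙ)
    (v : ℕ → ℝ) (hv : ∀ n, v n = (∫ ω, truncAux Z (b n) ω ^ 2 ∂ℙ) - (m n) ^ 2)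
    (η : ℝ) (hη : 0 < η) :
    Tendsto (fun n : ℕ =>
        ∫ ω in {ω | η * Real.sqrt (n : ℝ) <
            |(truncAux Z (b n) ω - m n) / Real.sqrt (v n)|},
          ((truncAux Z (b n) ω - m n) / Real.sqrt (v n)) ^ 2 ∂ℙ)
      atTop (nhds 0) := by
  classical
  -- squared truncation
  set f : ℝ → Ω → ℝ := fun x ω => truncAux Z x ω ^ 2 with hfdef
  have f_eq : ∀ x ω, f x ω = if |Z ω| ≤ x then (Z ω) ^ 2 else 0 := by
    intro x ω
    simp only [hfdef, truncAux]
    by_cases h : |Z ω| ≤ x <;> simp [h]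
  have meas_T : ∀ x, Measurable (truncAux Z x) := by
    intro x
    exact Measurable.ite (measurableSet_le hZ.abs measurable_const) hZ measurable_const
  have meas_f : ∀ x, Measurable (f x) := fun x => (meas_T x).pow_const 2
  have f_nonneg : ∀ x ω, 0 ≤ f x ω := fun x ω => sq_nonneg _
  have f_le : ∀ x ω, f x ω ≤ x ^ 2 := by
    intro x ω
    rw [f_eq]
    by_cases h : |Z ω| ≤ x
    · simp only [h, if_true]
      calc (Z ω) ^ 2 = |Z ω| ^ 2 := (sq_abs _).symm
      _ ≤ x ^ 2 := by
          apply pow_le_pow_left₀ (abs_nonneg _) h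
    · simp only [h, if_false]
      exact sq_nonneg x
  have f_mono : ∀ x y : ℝ, x ≤ y → ∀ ω, f x ω ≤ f y ω := by
    intro x y hxy ω
    rw [f_eq, f_eq]
    by_cases h : |Z ω| ≤ x
    · simp [h, h.trans hxy]
    · simp only [h, if_false]
      by_cases h' : |Z ω| ≤ y <;> simp [h', sq_nonneg]
  have int_f : ∀ x, Integrable (f x) ℙ := by
    intro x
    refine (integrable_const (x ^ 2)).mono' (meas_f x).aestronglyMeasurable ?_
    filter_upwards with ω
    rw [Real.norm_eq_abs, abs_of_nonneg (f_nonneg x ω)]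
    exact f_le x ω
  have l_nonneg : ∀ x, 0 ≤ l x := by
    intro x; rw [hl]; exact integral_nonneg (f_nonneg x)
  have l_mono : Monotone l := by
    intro x y hxy
    rw [hl, hl]
    exact integral_mono (int_f x) (int_f y) (f_mono x y hxy)
  -- l tends to infinity
  have l_top : Tendsto l atTop atTop := by
    have hlin : ∫⁻ ω, ENNReal.ofReal ((Z ω) ^ 2) ∂ℙ = ⊤ := by
      by_contra h
      apply hinf
      refine ⟨(hZ.pow_const 2).aestronglyMeasurable, ?_⟩
      rw [hasFiniteIntegral_iff_ofReal (Filter.Eventually.of_forall fun ω => sq_nonneg _)]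
      exact lt_top_iff_ne_top.mpr h
    have hmct : Tendsto (fun N : ℕ => ∫⁻ ω, ENNReal.ofReal (f N ω) ∂ℙ) atTop
        (nhds (∫⁻ ω, ENNReal.ofReal ((Z ω) ^ 2) ∂ℙ)) := by
      apply lintegral_tendsto_of_tendsto_of_monotone
      · exact fun N => (ENNReal.measurable_ofReal.comp (meas_f N)).aemeasurable
      · filter_upwards with ω
        intro i j hij
        exact ENNReal.ofReal_le_ofReal (f_mono _ _ (Nat.cast_le.mpr hij) ω)
      · filter_upwards with ω
        have hev : ∀ᶠ N : ℕ in atTop, ENNReal.ofReal (f N ω) = ENNReal.ofReal ((Z ω) ^ 2) := by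
          filter_upwards [eventually_ge_atTop ⌈|Z ω|⌉₊] with N hN
          rw [f_eq]
          have : |Z ω| ≤ (N : ℝ) :=
            (Nat.le_ceil _).trans (Nat.cast_le.mpr hN)
          simp [this]
        exact Tendsto.congr' (hev.mono fun N h => h.symm) tendsto_const_nhds
    rw [hlin] at hmct
    have hkey : ∀ M : ℝ, ∃ N : ℕ, M ≤ l N := by
      intro M
      have h1 : ∀ᶠ N : ℕ in atTop, ENNReal.ofReal (|M| + 1) < ∫⁻ ω, ENNReal.ofReal (f N ω) ∂ℙ :=
        hmct.eventually (eventually_gt_nhds (by simp [ENNReal.ofReal_lt_top]))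
      obtain ⟨N, hN⟩ := h1.exists
      rw [← ofReal_integral_eq_lintegral_ofReal (int_f N)
        (Filter.Eventually.of_forall (f_nonneg N)), ← hl] at hN
      refine ⟨N, ?_⟩
      by_contra hcon
      push_neg at hcon
      have : ENNReal.ofReal (l (N : ℝ)) ≤ ENNReal.ofReal (|M| + 1) :=
        ENNReal.ofReal_le_ofReal (by cases abs_cases M <;> linarith)
      exact absurd (lt_of_lt_of_le hN this) (lt_irrefl _)
    rw [tendsto_atTop]
    intro M
    obtain ⟨N, hN⟩ := hkey M
    filter_upwards [eventually_ge_atTop (N : ℝ)] with x hx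
    exact hN.trans (l_mono hx)
  -- facts about b₀
  have hS₀ne : Set.Nonempty {x : ℝ | 0 < x ∧ 0 < l x} := by
    obtain ⟨x, hx1, hx2⟩ := ((l_top.eventually_ge_atTop 1).and (eventually_ge_atTop 1)).exists
    exact ⟨x, lt_of_lt_of_le one_pos hx2, lt_of_lt_of_le one_pos hx1⟩
  have hb₀nn : 0 ≤ b₀ := by
    rw [hb₀]; exact le_csInf hS₀ne fun x hx => hx.1.le
  have l_pos : ∀ x, b₀ < x → 0 < l x := by
    intro x hx
    rw [hb₀] at hx
    obtain ⟨y, hy, hyx⟩ := exists_lt_of_csInf_lt hS₀ne hx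
    exact lt_of_lt_of_le hy.2 (l_mono hyx.le)
  set δ := l (b₀ + 1) with hδdef
  have hδ : 0 < δ := l_pos _ (lt_add_one b₀)
  have hlδ : ∀ x, b₀ + 1 ≤ x → δ ≤ l x := fun x hx => l_mono hx
  -- doubling control from slow variation
  obtain ⟨x₀, hx₀b, hx₀d⟩ :
      ∃ x₀ : ℝ, b₀ + 1 ≤ x₀ ∧ ∀ x, x₀ ≤ x → l (2 * x) ≤ 3 / 2 * l x := by
    have h2 := hslow 2 two_pos
    have hev : ∀ᶠ x : ℝ in atTop, l (2 * x) / l x < 3 / 2 :=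
      h2.eventually (eventually_lt_nhds (by norm_num))
    obtain ⟨y₀, hy₀⟩ := (hev.and (eventually_ge_atTop (b₀ + 1))).exists_forall_of_atTop
    refine ⟨max y₀ (b₀ + 1), le_max_right _ _, ?_⟩
    intro x hx
    have hx1 := (le_max_left y₀ (b₀ + 1)).trans hx
    have hx2 := (le_max_right y₀ (b₀ + 1)).trans hx
    have hlx : 0 < l x := l_pos x (by linarith)
    have := (hy₀ x hx1).1
    rw [div_lt_iff₀ hlx] at this
    linarith
  have hx₀pos : 0 < x₀ := lt_of_lt_of_le (by linarith) hx₀b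
  have hdyad : ∀ k : ℕ, l (2 ^ k * x₀) ≤ (3 / 2) ^ k * l x₀ := by
    intro k
    induction k with
    | zero => simp
    | succ k ih =>
      have h1 : x₀ ≤ 2 ^ k * x₀ := by
        have h2 : (1:ℝ) ≤ 2 ^ k := one_le_pow₀ (by norm_num)
        nlinarith [hx₀pos]
      calc l (2 ^ (k + 1) * x₀) = l (2 * (2 ^ k * x₀)) := by ring_nf
        _ ≤ 3 / 2 * l (2 ^ k * x₀) := hx₀d _ h1
        _ ≤ 3 / 2 * ((3 / 2) ^ k * l x₀) := by
            have := l_nonneg (2 ^ k * x₀); nlinarith [ih]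
        _ = (3 / 2) ^ (k + 1) * l x₀ := by ring
  -- the defining sets for b are nonempty
  have hSne : ∀ n : ℕ, Set.Nonempty {x : ℝ | b₀ + 1 ≤ x ∧ (n : ℝ) * l x ≤ x ^ 2} := by
    intro n
    have hgr : Tendsto (fun k : ℕ => ((8:ℝ) / 3) ^ k) atTop atTop :=
      tendsto_pow_atTop_atTop_of_one_lt (by norm_num)
    obtain ⟨k, hk⟩ := (hgr.eventually_ge_atTop ((n : ℝ) * l x₀ / x₀ ^ 2)).exists
    refine ⟨2 ^ k * x₀, ?_, ?_⟩
    · have h2 : (1:ℝ) ≤ 2 ^ k := one_le_pow₀ (by norm_num)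
      nlinarith [hx₀pos]
    · have h1 : (n : ℝ) * l (2 ^ k * x₀) ≤ (n : ℝ) * ((3 / 2) ^ k * l x₀) := by
        have := hdyad k
        have hn : (0:ℝ) ≤ n := Nat.cast_nonneg n
        nlinarith
      have h2 : (n : ℝ) * l x₀ ≤ ((8:ℝ) / 3) ^ k * x₀ ^ 2 := by
        rw [div_le_iff₀ (by positivity)] at hk
        linarith
      have h3 : ((3:ℝ) / 2) ^ k * (((8:ℝ)/3) ^ k) = 4 ^ k := by
        rw [← mul_pow]; norm_num
      have h4 : ((2:ℝ) ^ k * x₀) ^ 2 = 4 ^ k * x₀ ^ 2 := by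
        rw [mul_pow, ← pow_mul, pow_mul']; norm_num
      have h32 : (0:ℝ) < (3/2 : ℝ) ^ k := by positivity
      calc (n : ℝ) * l (2 ^ k * x₀) ≤ (3 / 2) ^ k * ((n:ℝ) * l x₀) := by linarith
        _ ≤ (3 / 2) ^ k * (((8:ℝ) / 3) ^ k * x₀ ^ 2) := by nlinarith
        _ = 4 ^ k * x₀ ^ 2 := by rw [← mul_assoc, h3]
        _ = ((2:ℝ) ^ k * x₀) ^ 2 := h4.symm
  have hSbdd : ∀ n : ℕ, BddBelow {x : ℝ | b₀ + 1 ≤ x ∧ (n : ℝ) * l x ≤ x ^ 2} :=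
    fun n => ⟨b₀ + 1, fun x hx => hx.1⟩
  have hbnlb : ∀ n, b₀ + 1 ≤ b n := by
    intro n; rw [hb]; exact le_csInf (hSne n) fun x hx => hx.1
  have hbn1 : ∀ n, 1 ≤ b n := fun n => by linarith [hbnlb n, hb₀nn]
  have hbn0 : ∀ n, 0 < b n := fun n => lt_of_lt_of_le one_pos (hbn1 n)
  have hlbδ : ∀ n, δ ≤ l (b n) := fun n => hlδ _ (hbnlb n)
  -- b tends to infinity
  have hb_top : Tendsto b atTop atTop := by
    rw [tendsto_atTop]
    intro M
    set M' := max M (b₀ + 1) with hM'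
    have hM'pos : 0 < M' := lt_of_lt_of_le (by linarith) (le_max_right _ _)
    have hev : ∀ᶠ n : ℕ in atTop, M' ^ 2 < (n : ℝ) * δ := by
      have : Tendsto (fun n : ℕ => (n : ℝ) * δ) atTop atTop :=
        (tendsto_natCast_atTop_atTop).atTop_mul_const hδ
      exact this.eventually_gt_atTop _
    filter_upwards [hev] with n hn
    refine le_trans (le_max_left M (b₀ + 1)) ?_
    rw [hb]
    refine le_csInf (hSne n) ?_
    intro x hx
    by_contra hcon
    push_neg at hcon
    have hx1 : b₀ + 1 ≤ x := hx.1
    have hlx : δ ≤ l x := hlδ x hx1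
    have hxpos : 0 < x := by linarith [hb₀nn]
    have hx2 : x ^ 2 < M' ^ 2 := by nlinarith
    have hn0 : (0:ℝ) ≤ n := Nat.cast_nonneg n
    have : (n:ℝ) * l x ≤ x ^ 2 := hx.2
    nlinarith
  -- key: (b n)² ≤ n l(b n) once b n > b₀+1
  have keyA : ∀ n : ℕ, b₀ + 1 < b n → (b n) ^ 2 ≤ (n : ℝ) * l (b n) := by
    intro n hbig
    by_contra hcon
    push_neg at hcon
    set C := (n : ℝ) * l (b n) with hC
    have hC0 : 0 ≤ C := mul_nonneg (Nat.cast_nonneg n) (l_nonneg _)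
    have hsq : Real.sqrt C < b n := (Real.sqrt_lt' (hbn0 n)).mpr hcon
    set mid := (Real.sqrt C + b n) / 2 with hmid
    have hmid1 : Real.sqrt C < mid := by
      rw [hmid]; linarith
    have hmid2 : mid < b n := by rw [hmid]; linarith
    set x := max (b₀ + 1) mid with hx
    have hx1 : b₀ + 1 ≤ x := le_max_left _ _
    have hx2 : x < b n := max_lt hbig hmid2
    have hxmid : mid ≤ x := le_max_right _ _
    have hnotmem : x ∉ {y : ℝ | b₀ + 1 ≤ y ∧ (n : ℝ) * l y ≤ y ^ 2} := by
      intro hmem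
      have : b n ≤ x := by
        rw [hb]; exact csInf_le (hSbdd n) hmem
      linarith
    have hgt : x ^ 2 < (n : ℝ) * l x := by
      by_contra h
      push_neg at h
      exact hnotmem ⟨hx1, h⟩
    have hlx : l x ≤ l (b n) := l_mono hx2.le
    have hCx : C < x ^ 2 := by
      have h1 : Real.sqrt C < x := lt_of_lt_of_le hmid1 hxmid
      have h2 : Real.sqrt C ^ 2 < x ^ 2 := by
        apply pow_lt_pow_left₀ h1 (Real.sqrt_nonneg C)
        norm_num
      rwa [Real.sq_sqrt hC0] at h2
    have hn0 : (0:ℝ) ≤ n := Nat.cast_nonneg n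
    nlinarith
  -- Z is integrable
  have hZint : Integrable Z ℙ := by
    set g : ℕ → Ω → ℝ := fun K ω => if |Z ω| ≤ 2 ^ K * x₀ then |Z ω| else 0 with hgdef
    have meas_g : ∀ K, Measurable (g K) :=
      fun K => Measurable.ite (measurableSet_le hZ.abs measurable_const) hZ.abs measurable_const
    have g_nonneg : ∀ K ω, 0 ≤ g K ω := by
      intro K ω
      rw [hgdef]
      by_cases h : |Z ω| ≤ 2 ^ K * x₀ <;> simp [h, abs_nonneg]
    have g_le : ∀ K ω, g K ω ≤ 2 ^ K * x₀ := by
      intro K ω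
      rw [hgdef]
      by_cases h : |Z ω| ≤ 2 ^ K * x₀ <;> simp [h] <;> positivity
    have int_g : ∀ K, Integrable (g K) ℙ := by
      intro K
      refine (integrable_const ((2:ℝ) ^ K * x₀)).mono' (meas_g K).aestronglyMeasurable ?_
      filter_upwards with ω
      rw [Real.norm_eq_abs, abs_of_nonneg (g_nonneg K ω)]
      exact g_le K ω
    set C := l x₀ / x₀ with hCdef
    have hC0 : 0 ≤ C := div_nonneg (l_nonneg _) hx₀pos.le
    have step : ∀ K : ℕ, ∫ ω, g (K + 1) ω ∂ℙ ≤
        (∫ ω, g K ω ∂ℙ) + (3 / 2) * (3 / 4) ^ K * C := by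
      intro K
      have hpow : (0:ℝ) < 2 ^ K * x₀ := by positivity
      have hpt : ∀ ω, g (K + 1) ω ≤ g K ω + f (2 ^ (K + 1) * x₀) ω / (2 ^ K * x₀) := by
        intro ω
        rw [hgdef, f_eq]
        simp only []
        have hKK : (2:ℝ) ^ K * x₀ ≤ 2 ^ (K + 1) * x₀ := by
          rw [pow_succ]; nlinarith
        by_cases h1 : |Z ω| ≤ 2 ^ K * x₀
        · have h2 : |Z ω| ≤ 2 ^ (K + 1) * x₀ := h1.trans hKK
          simp only [h1, h2, if_true]
          have : 0 ≤ (Z ω) ^ 2 / (2 ^ K * x₀) := by positivity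
          linarith
        · push_neg at h1
          by_cases h2 : |Z ω| ≤ 2 ^ (K + 1) * x₀
          · simp only [h1.not_ge, h2, if_true, if_false]
            have hsq : (Z ω) ^ 2 = |Z ω| * |Z ω| := by rw [← sq_abs]; ring
            rw [hsq, zero_add, le_div_iff₀ hpow]
            nlinarith [abs_nonneg (Z ω)]
          · simp only [h1.not_ge, h2, if_false]
            positivity
      have hint : Integrable (fun ω => g K ω + f (2 ^ (K + 1) * x₀) ω / (2 ^ K * x₀)) ℙ :=
        (int_g K).add ((int_f _).div_const _)
      calc ∫ ω, g (K + 1) ω ∂ℙ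
          ≤ ∫ ω, (g K ω + f (2 ^ (K + 1) * x₀) ω / (2 ^ K * x₀)) ∂ℙ :=
            integral_mono (int_g (K + 1)) hint hpt
        _ = (∫ ω, g K ω ∂ℙ) + (∫ ω, f (2 ^ (K + 1) * x₀) ω ∂ℙ) / (2 ^ K * x₀) := by
            rw [integral_add (int_g K) ((int_f _).div_const _), integral_div]
        _ ≤ (∫ ω, g K ω ∂ℙ) + (3 / 2) * (3 / 4) ^ K * C := by
            have h1 : ∫ ω, f (2 ^ (K + 1) * x₀) ω ∂ℙ = l (2 ^ (K + 1) * x₀) := (hl _).symm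
            rw [h1]
            have h2 := hdyad (K + 1)
            have h3 : l (2 ^ (K + 1) * x₀) / (2 ^ K * x₀) ≤
                ((3 / 2 : ℝ) ^ (K + 1) * l x₀) / (2 ^ K * x₀) := by
              gcongr
            have e0 : ((3:ℝ) / 4) ^ K * 2 ^ K = (3 / 2) ^ K := by
              rw [← mul_pow]; norm_num
            have h4 : ((3 / 2 : ℝ) ^ (K + 1) * l x₀) / (2 ^ K * x₀)
                = (3 / 2) * (3 / 4) ^ K * C := by
              rw [hCdef, pow_succ, ← e0]
              field_simp
            linarith
    have bound : ∀ K : ℕ, ∫ ω, g K ω ∂ℙ ≤ x₀ + 6 * C * (1 - (3 / 4) ^ K) := by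
      intro K
      induction K with
      | zero =>
        simp only [pow_zero, sub_self, mul_zero, add_zero]
        calc ∫ ω, g 0 ω ∂ℙ ≤ ∫ _ω, x₀ ∂ℙ := by
              apply integral_mono (int_g 0) (integrable_const _)
              intro ω
              have := g_le 0 ω
              simpa using this
          _ = x₀ := by simp
      | succ K ih =>
        have h34 : (0:ℝ) < (3 / 4 : ℝ) ^ K := by positivity
        calc ∫ ω, g (K + 1) ω ∂ℙ ≤ (∫ ω, g K ω ∂ℙ) + (3 / 2) * (3 / 4) ^ K * C := step K
          _ ≤ x₀ + 6 * C * (1 - (3 / 4) ^ K) + (3 / 2) * (3 / 4) ^ K * C := by linarith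
          _ = x₀ + 6 * C * (1 - (3 / 4) ^ (K + 1)) := by ring
    have bound' : ∀ K : ℕ, ∫ ω, g K ω ∂ℙ ≤ x₀ + 6 * C := by
      intro K
      have h34 : (0:ℝ) ≤ (3 / 4 : ℝ) ^ K := by positivity
      have h34' : (3 / 4 : ℝ) ^ K ≤ 1 := pow_le_one₀ (by norm_num) (by norm_num)
      nlinarith [bound K]
    -- monotone convergence to |Z|
    have hmct : Tendsto (fun K : ℕ => ∫⁻ ω, ENNReal.ofReal (g K ω) ∂ℙ) atTop
        (nhds (∫⁻ ω, ENNReal.ofReal |Z ω| ∂ℙ)) := by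
      apply lintegral_tendsto_of_tendsto_of_monotone
      · exact fun K => (ENNReal.measurable_ofReal.comp (meas_g K)).aemeasurable
      · filter_upwards with ω
        intro i j hij
        apply ENNReal.ofReal_le_ofReal
        rw [hgdef]
        simp only []
        by_cases h : |Z ω| ≤ 2 ^ i * x₀
        · have h2 : |Z ω| ≤ 2 ^ j * x₀ := by
            refine h.trans ?_
            have : (2:ℝ) ^ i ≤ 2 ^ j := pow_le_pow_right₀ (by norm_num) hij
            nlinarith
          simp [h, h2]
        · simp only [h, if_false]
          exact g_nonneg j ω
      · filter_upwards with ω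
        have hgr : Tendsto (fun K : ℕ => (2:ℝ) ^ K * x₀) atTop atTop :=
          (tendsto_pow_atTop_atTop_of_one_lt (by norm_num : (1:ℝ) < 2)).atTop_mul_const hx₀pos
        have hev : ∀ᶠ K : ℕ in atTop, ENNReal.ofReal (g K ω) = ENNReal.ofReal |Z ω| := by
          filter_upwards [hgr.eventually_ge_atTop |Z ω|] with K hK
          rw [hgdef]
          simp [hK]
        exact Tendsto.congr' (hev.mono fun K h => h.symm) tendsto_const_nhds
    have hfin : ∫⁻ ω, ENNReal.ofReal |Z ω| ∂ℙ ≤ ENNReal.ofReal (x₀ + 6 * C) := by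
      refine le_of_tendsto' hmct ?_
      intro K
      rw [← ofReal_integral_eq_lintegral_ofReal (int_g K)
        (Filter.Eventually.of_forall (g_nonneg K))]
      exact ENNReal.ofReal_le_ofReal (bound' K)
    refine ⟨hZ.aestronglyMeasurable, ?_⟩
    rw [HasFiniteIntegral]
    calc ∫⁻ ω, ‖Z ω‖₊ ∂ℙ = ∫⁻ ω, ENNReal.ofReal |Z ω| ∂ℙ := by
          congr 1
          ext ω
          exact Real.enorm_eq_ofReal_abs _
      _ ≤ ENNReal.ofReal (x₀ + 6 * C) := hfin
      _ < ⊤ := ENNReal.ofReal_lt_top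
  -- truncations integrable and converging
  have hTZint : ∀ n, Integrable (truncAux Z (b n)) ℙ := by
    intro n
    refine (integrable_const (b n)).mono' (meas_T (b n)).aestronglyMeasurable ?_
    filter_upwards with ω
    rw [Real.norm_eq_abs, truncAux]
    by_cases h : |Z ω| ≤ b n <;> simp [h, abs_of_nonneg, (hbn0 n).le]
  have hm_to : Tendsto m atTop (nhds 0) := by
    have hdct : Tendsto (fun n => ∫ ω, truncAux Z (b n) ω ∂ℙ) atTop (nhds (∫ ω, Z ω ∂ℙ)) := by
      apply tendsto_integral_of_dominated_convergence (fun ω => |Z ω|)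
      · exact fun n => (meas_T (b n)).aestronglyMeasurable
      · exact hZint.abs
      · intro n
        filter_upwards with ω
        rw [Real.norm_eq_abs, truncAux]
        by_cases h : |Z ω| ≤ b n <;> simp [h, abs_nonneg]
      · filter_upwards with ω
        have hev : ∀ᶠ n : ℕ in atTop, truncAux Z (b n) ω = Z ω := by
          filter_upwards [hb_top.eventually_ge_atTop |Z ω|] with n hn
          rw [truncAux]
          simp [hn]
        exact Tendsto.congr' (hev.mono fun n h => h.symm) tendsto_const_nhds
    rw [hmean] at hdct
    exact hdct.congr fun n => (hm n).symm
  -- limits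
  have hlb_top : Tendsto (fun n => l (b n)) atTop atTop := l_top.comp hb_top
  have hm2_to : Tendsto (fun n => m n ^ 2) atTop (nhds 0) := by
    have := hm_to.pow 2
    simpa using this
  have hinvl : Tendsto (fun n => (l (b n))⁻¹) atTop (nhds 0) :=
    hlb_top.inv_tendsto_atTop
  have hm2l : Tendsto (fun n => m n ^ 2 / l (b n)) atTop (nhds 0) := by
    have := hm2_to.mul hinvl
    simp only [mul_zero, zero_mul] at this
    exact this.congr fun n => (div_eq_mul_inv _ _).symm
  set c : ℝ := min (η / 4) (1 / 2) with hcdef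
  have hc0 : 0 < c := lt_min (by linarith) (by norm_num)
  have hc1 : c ≤ 1 := (min_le_right _ _).trans (by norm_num)
  have hcη : c ≤ η / 4 := min_le_left _ _
  have hslowc : Tendsto (fun n => l (c * b n) / l (b n)) atTop (nhds 1) :=
    (hslow c hc0).comp hb_top
  have hD_to : Tendsto (fun n => (l (b n) - l (c * b n)) / l (b n)) atTop (nhds 0) := by
    have h1 : Tendsto (fun n => 1 - l (c * b n) / l (b n)) atTop (nhds 0) := by
      have := tendsto_const_nhds (x := (1:ℝ)) (f := atTop (α := ℕ)) |>.sub hslowc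
      simpa using this
    refine h1.congr fun n => ?_
    have hL : l (b n) ≠ 0 := ne_of_gt (lt_of_lt_of_le hδ (hlbδ n))
    field_simp
  set B : ℕ → ℝ := fun n => 4 * ((l (b n) - l (c * b n)) / l (b n)) + 4 * (m n ^ 2 / l (b n))
    with hBdef
  have hB_to : Tendsto B atTop (nhds 0) := by
    have := ((tendsto_const_nhds (x := (4:ℝ)) (f := atTop (α := ℕ))).mul hD_to).add
      ((tendsto_const_nhds (x := (4:ℝ))).mul hm2l)
    simpa using this
  -- the eventual bound
  have hIB : ∀ᶠ n : ℕ in atTop,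
      (∫ ω in {ω | η * Real.sqrt (n : ℝ) <
          |(truncAux Z (b n) ω - m n) / Real.sqrt (v n)|},
        ((truncAux Z (b n) ω - m n) / Real.sqrt (v n)) ^ 2 ∂ℙ) ≤ B n := by
    have htri : ∀ a b : ℝ, |a - b| ≤ |a| + |b| := by
      intro a b
      rw [sub_eq_add_neg]
      exact (abs_add_le _ _).trans (by rw [abs_neg])
    have e1 : ∀ᶠ n : ℕ in atTop, b₀ + 1 < b n := hb_top.eventually_gt_atTop _
    have e2 : ∀ᶠ n : ℕ in atTop, m n ^ 2 ≤ δ / 2 :=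
      hm2_to.eventually (eventually_le_nhds (by positivity))
    have e3 : ∀ᶠ n : ℕ in atTop, |m n| ≤ η / 4 := by
      have habs : Tendsto (fun n => |m n|) atTop (nhds 0) := by
        have := hm_to.abs; simpa using this
      exact habs.eventually (eventually_le_nhds (by positivity))
    filter_upwards [e1, e2, e3] with n h1 h2 h3
    have hLδ : δ ≤ l (b n) := hlbδ n
    have hL0 : 0 < l (b n) := lt_of_lt_of_le hδ hLδ
    have hvn : v n = l (b n) - m n ^ 2 := by rw [hv n, ← hl (b n)]
    have hm2L : m n ^ 2 ≤ l (b n) / 2 := h2.trans (by linarith)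
    have hv_lb : l (b n) / 2 ≤ v n := by rw [hvn]; linarith
    have hv_pos : 0 < v n := lt_of_lt_of_le (by positivity) hv_lb
    have hkey : (b n) ^ 2 ≤ (n : ℝ) * l (b n) := keyA n h1
    have hn0 : (0:ℝ) ≤ n := Nat.cast_nonneg n
    have hnv : (b n) ^ 2 / 2 ≤ (n : ℝ) * v n := by
      rw [hvn]
      nlinarith [mul_nonneg hn0 (by linarith : (0:ℝ) ≤ l (b n) / 2 - m n ^ 2)]
    have hsqrt : η * (b n / 2) ≤ η * Real.sqrt n * Real.sqrt (v n) := by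
      have h5 : b n / 2 ≤ Real.sqrt ((n:ℝ) * v n) := by
        rw [show b n / 2 = Real.sqrt ((b n / 2) ^ 2) from
          (Real.sqrt_sq (by linarith [hbn0 n] : (0:ℝ) ≤ b n / 2)).symm]
        apply Real.sqrt_le_sqrt
        nlinarith [sq_nonneg (b n)]
      rw [mul_assoc, ← Real.sqrt_mul (Nat.cast_nonneg n)]
      nlinarith [mul_nonneg hη.le (sub_nonneg.mpr h5)]
    have hcb_le : c * b n ≤ b n := by nlinarith [hbn0 n]
    set A : Set Ω := {ω | η * Real.sqrt (n : ℝ) <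
        |(truncAux Z (b n) ω - m n) / Real.sqrt (v n)|} with hAdef
    set Shell : Set Ω := {ω | c * b n < |Z ω| ∧ |Z ω| ≤ b n} with hShelldef
    have hsub : A ⊆ Shell := by
      intro ω hω
      simp only [hAdef, hShelldef, Set.mem_setOf_eq] at hω ⊢
      have hsv : 0 < Real.sqrt (v n) := Real.sqrt_pos.mpr hv_pos
      rw [abs_div, abs_of_nonneg (Real.sqrt_nonneg _), lt_div_iff₀ hsv] at hω
      have h4 : η * (b n / 2) < |truncAux Z (b n) ω - m n| :=
        lt_of_le_of_lt hsqrt hω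
      have hT_big : c * b n < |truncAux Z (b n) ω| := by
        have h6 := htri (truncAux Z (b n) ω) (m n)
        have h7 : |truncAux Z (b n) ω - m n| ≤ |truncAux Z (b n) ω| + |m n| := h6
        have hcb : c * b n ≤ η / 4 * b n :=
          mul_le_mul_of_nonneg_right hcη (hbn0 n).le
        nlinarith [h3, hbn1 n, hη.le]
      by_cases hZb : |Z ω| ≤ b n
      · refine ⟨?_, hZb⟩
        have hTZ : truncAux Z (b n) ω = Z ω := by rw [truncAux]; simp [hZb]
        rwa [hTZ] at hT_big
      · exfalso
        have hTZ : truncAux Z (b n) ω = 0 := by rw [truncAux]; simp [hZb]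
        rw [hTZ, abs_zero] at hT_big
        nlinarith [hbn0 n, hc0]
    have hshell_meas : MeasurableSet Shell := by
      have : Shell = {ω | c * b n < |Z ω|} ∩ {ω | |Z ω| ≤ b n} := rfl
      rw [this]
      exact (measurableSet_lt measurable_const hZ.abs).inter
        (measurableSet_le hZ.abs measurable_const)
    have hshell_int : ∫ ω in Shell, truncAux Z (b n) ω ^ 2 ∂ℙ
        = l (b n) - l (c * b n) := by
      have hpt : ∀ ω, Shell.indicator (fun ω => truncAux Z (b n) ω ^ 2) ω
          = f (b n) ω - f (c * b n) ω := by
        intro ω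
        rw [f_eq, f_eq]
        by_cases hA : |Z ω| ≤ c * b n
        · have hB : |Z ω| ≤ b n := hA.trans hcb_le
          have hnot : ω ∉ Shell := fun h => absurd h.1 (not_lt.mpr hA)
          rw [Set.indicator_of_notMem hnot]
          simp [hA, hB]
        · push_neg at hA
          by_cases hB : |Z ω| ≤ b n
          · have hin : ω ∈ Shell := ⟨hA, hB⟩
            rw [Set.indicator_of_mem hin]
            simp [truncAux, hA.not_ge, hB]
          · have hnot : ω ∉ Shell := fun h => absurd h.2 hB
            rw [Set.indicator_of_notMem hnot]
            simp [hA.not_ge, hB]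
      calc ∫ ω in Shell, truncAux Z (b n) ω ^ 2 ∂ℙ
          = ∫ ω, Shell.indicator (fun ω => truncAux Z (b n) ω ^ 2) ω ∂ℙ :=
            (integral_indicator hshell_meas).symm
        _ = ∫ ω, (f (b n) ω - f (c * b n) ω) ∂ℙ := by
            apply integral_congr_ae
            filter_upwards with ω
            exact hpt ω
        _ = l (b n) - l (c * b n) := by
            rw [integral_sub (int_f _) (int_f _), ← hl, ← hl]
    have hInt_sub_sq : Integrable (fun ω => (truncAux Z (b n) ω - m n) ^ 2) ℙ := by
      refine (integrable_const ((b n + |m n|) ^ 2)).mono'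
        ((((meas_T (b n)).sub measurable_const).pow_const 2)).aestronglyMeasurable ?_
      filter_upwards with ω
      rw [Real.norm_eq_abs, abs_of_nonneg (sq_nonneg _)]
      have hT_le : |truncAux Z (b n) ω| ≤ b n := by
        rw [truncAux]; by_cases h : |Z ω| ≤ b n <;> simp [h, (hbn0 n).le]
      have h8 : |truncAux Z (b n) ω - m n| ≤ b n + |m n| :=
        (htri _ _).trans (add_le_add hT_le le_rfl)
      calc (truncAux Z (b n) ω - m n) ^ 2 = |truncAux Z (b n) ω - m n| ^ 2 :=
            (sq_abs _).symm
        _ ≤ (b n + |m n|) ^ 2 := by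
            apply pow_le_pow_left₀ (abs_nonneg _) h8
    have hnum1 : ∫ ω in A, (truncAux Z (b n) ω - m n) ^ 2 ∂ℙ
        ≤ ∫ ω in A, (2 * truncAux Z (b n) ω ^ 2 + 2 * m n ^ 2) ∂ℙ := by
      apply integral_mono hInt_sub_sq.restrict
        (((int_f (b n)).const_mul 2).add (integrable_const _)).restrict
      intro ω
      show (truncAux Z (b n) ω - m n) ^ 2 ≤ 2 * truncAux Z (b n) ω ^ 2 + 2 * m n ^ 2
      nlinarith [sq_nonneg (truncAux Z (b n) ω + m n)]
    have hmono : ∫ ω in A, truncAux Z (b n) ω ^ 2 ∂ℙ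
        ≤ ∫ ω in Shell, truncAux Z (b n) ω ^ 2 ∂ℙ := by
      apply setIntegral_mono_set (int_f (b n)).integrableOn
      · exact Filter.Eventually.of_forall fun ω => sq_nonneg _
      · exact HasSubset.Subset.eventuallyLE hsub
    have hmono' : ∫ ω in A, truncAux Z (b n) ω ^ 2 ∂ℙ ≤ l (b n) - l (c * b n) :=
      hshell_int ▸ hmono
    have hPA : (ℙ A).toReal ≤ 1 := by
      calc (ℙ A).toReal ≤ (1 : ENNReal).toReal :=
            ENNReal.toReal_mono ENNReal.one_ne_top prob_le_one
        _ = 1 := ENNReal.toReal_one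
    have hnum2 : ∫ ω in A, (2 * truncAux Z (b n) ω ^ 2 + 2 * m n ^ 2) ∂ℙ
        ≤ 2 * (l (b n) - l (c * b n)) + 2 * m n ^ 2 := by
      have hsplit : ∫ ω in A, (2 * truncAux Z (b n) ω ^ 2 + 2 * m n ^ 2) ∂ℙ
          = 2 * (∫ ω in A, truncAux Z (b n) ω ^ 2 ∂ℙ)
            + (ℙ A).toReal * (2 * m n ^ 2) := by
        rw [integral_add ((int_f (b n)).const_mul 2).restrict (integrable_const _).restrict,
          integral_const_mul, setIntegral_const, smul_eq_mul]
        rfl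
      rw [hsplit]
      have h2m : (0:ℝ) ≤ 2 * m n ^ 2 := by positivity
      nlinarith [ENNReal.toReal_nonneg (a := ℙ A)]
    have hpt2 : ∀ ω : Ω, ((truncAux Z (b n) ω - m n) / Real.sqrt (v n)) ^ 2
        = (truncAux Z (b n) ω - m n) ^ 2 / v n := by
      intro ω
      rw [div_pow, Real.sq_sqrt hv_pos.le]
    have hnum_nonneg : 0 ≤ 2 * (l (b n) - l (c * b n)) + 2 * m n ^ 2 := by
      have := l_mono hcb_le
      nlinarith [sq_nonneg (m n)]
    calc ∫ ω in A, ((truncAux Z (b n) ω - m n) / Real.sqrt (v n)) ^ 2 ∂ℙ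
        = (∫ ω in A, (truncAux Z (b n) ω - m n) ^ 2 ∂ℙ) / v n := by
          rw [← integral_div]
          apply integral_congr_ae
          filter_upwards with ω
          exact hpt2 ω
      _ ≤ (2 * (l (b n) - l (c * b n)) + 2 * m n ^ 2) / v n := by
          gcongr
          exact hnum1.trans hnum2
      _ ≤ (2 * (l (b n) - l (c * b n)) + 2 * m n ^ 2) / (l (b n) / 2) :=
          div_le_div_of_nonneg_left hnum_nonneg (by positivity) hv_lb
      _ = B n := by
          rw [hBdef]
          field_simp
          ring
  refine squeeze_zero' ?_ hIB hB_to
  filter_upwards with n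
  exact integral_nonneg fun ω => sq_nonneg _

/-- Lindeberg condition for the truncated and standardized variables
`Y_n = [Var(X 1_{|X| ≤ b_n})]^{-1/2}(X 1_{|X| ≤ b_n} − E[X 1_{|X| ≤ b_n}])`:
for every `η > 0`, `E[|Y_n|² 1_{|Y_n| > η √n}] → 0`. -/
theorem lindeberg_condition_truncated
    {Ω : Type*} [MeasureSpace Ω] [IsProbabilityMeasure (ℙ : Measure Ω)]
    (X : Ω → ℝ) (hX : AEMeasurable X ℙ)
    (hmean : ∫ ω, X ω ∂ℙ = 0)
    (l : ℝ → ℝ)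
    (hl : ∀ x : ℝ, l x = ∫ ω in {ω | |X ω| ≤ x}, |X ω| ^ 2 ∂ℙ)
    (hslow : ∀ c : ℝ, 0 < c → Tendsto (fun x => l (c * x) / l x) atTop (nhds 1))
    (hinf : ¬ Integrable (fun ω => |X ω| ^ 2) ℙ)
    (b₀ : ℝ) (hb₀ : b₀ = sInf {x : ℝ | 0 < x ∧ 0 < l x})
    (b : ℕ → ℝ)
    (hb : ∀ n, b n = sInf {x : ℝ | b₀ + 1 ≤ x ∧ n * l x ≤ x ^ 2})
    (T : ℕ → Ω → ℝ)
    (hT : ∀ n ω, T n ω = if |X ω| ≤ b n then X ω else 0)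
    (m : ℕ → ℝ) (hm : ∀ n, m n = ∫ ω, T n ω ∂ℙ)
    (v : ℕ → ℝ) (hv : ∀ n, v n = (∫ ω, (T n ω) ^ 2 ∂ℙ) - (m n) ^ 2)
    (Y : ℕ → Ω → ℝ)
    (hY : ∀ n ω, Y n ω = (T n ω - m n) / Real.sqrt (v n)) :
    ∀ η : ℝ, 0 < η →
      Tendsto (fun n : ℕ =>
          ∫ ω in {ω | η * Real.sqrt n < |Y n ω|}, (Y n ω) ^ 2 ∂ℙ)
        atTop (nhds 0) := by
  intro η hη
  set Z : Ω → ℝ := hX.mk X with hZdef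
  have hZ : Measurable Z := hX.measurable_mk
  have hae : X =ᵐ[ℙ] Z := hX.ae_eq_mk
  -- T n =ᵐ truncAux Z (b n)
  have hTae : ∀ n, T n =ᵐ[ℙ] truncAux Z (b n) := by
    intro n
    filter_upwards [hae] with ω h
    rw [hT, truncAux, h]
  -- l in terms of Z
  have hl' : ∀ x : ℝ, l x = ∫ ω, truncAux Z x ω ^ 2 ∂ℙ := by
    intro x
    have hset : {ω | |X ω| ≤ x} =ᵐ[ℙ] {ω | |Z ω| ≤ x} := by
      apply Filter.eventuallyEq_set.mpr
      filter_upwards [hae] with ω h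
      rw [h]
    have hms : MeasurableSet {ω | |Z ω| ≤ x} := by
      exact measurableSet_le hZ.abs measurable_const
    calc l x = ∫ ω in {ω | |X ω| ≤ x}, |X ω| ^ 2 ∂ℙ := hl x
      _ = ∫ ω in {ω | |Z ω| ≤ x}, |X ω| ^ 2 ∂ℙ := by
          rw [Measure.restrict_congr_set hset]
      _ = ∫ ω in {ω | |Z ω| ≤ x}, (Z ω) ^ 2 ∂ℙ := by
          apply integral_congr_ae
          apply ae_restrict_of_ae
          filter_upwards [hae] with ω h
          rw [h, sq_abs]
      _ = ∫ ω, truncAux Z x ω ^ 2 ∂ℙ := by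
          rw [← integral_indicator hms]
          congr 1
          ext ω
          by_cases h : |Z ω| ≤ x
          · simp [truncAux, h, Set.indicator_of_mem (show ω ∈ {ω | |Z ω| ≤ x} from h)]
          · simp [truncAux, h, Set.indicator_of_notMem (show ω ∉ {ω | |Z ω| ≤ x} from h)]
    
  have hinf' : ¬ Integrable (fun ω => (Z ω) ^ 2) ℙ := by
    intro h
    apply hinf
    apply h.congr
    filter_upwards [hae] with ω h
    rw [h, sq_abs]
  have hmean' : ∫ ω, Z ω ∂ℙ = 0 := by
    rw [← integral_congr_ae hae, hmean]
  have hm' : ∀ n, m n = ∫ ω, truncAux Z (b n) ω ∂ℙ := by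
    intro n; rw [hm n]; exact integral_congr_ae (hTae n)
  have hv' : ∀ n, v n = (∫ ω, truncAux Z (b n) ω ^ 2 ∂ℙ) - (m n) ^ 2 := by
    intro n; rw [hv n]
    congr 1
    exact integral_congr_ae ((hTae n).mono fun ω h => by simp only [h])
  have key := lindeberg_main Z hZ hmean' l hl' hslow hinf' b₀ hb₀ b hb m hm' v hv' η hη
  -- transfer the integrals
  have heq : ∀ n : ℕ,
      (∫ ω in {ω | η * Real.sqrt n < |Y n ω|}, (Y n ω) ^ 2 ∂ℙ)
      = ∫ ω in {ω | η * Real.sqrt n <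
            |(truncAux Z (b n) ω - m n) / Real.sqrt (v n)|},
          ((truncAux Z (b n) ω - m n) / Real.sqrt (v n)) ^ 2 ∂ℙ := by
    intro n
    have hYae : Y n =ᵐ[ℙ] fun ω => (truncAux Z (b n) ω - m n) / Real.sqrt (v n) := by
      filter_upwards [hTae n] with ω h
      rw [hY, h]
    have hset : {ω | η * Real.sqrt n < |Y n ω|} =ᵐ[ℙ]
        {ω | η * Real.sqrt n < |(truncAux Z (b n) ω - m n) / Real.sqrt (v n)|} := by
      apply Filter.eventuallyEq_set.mpr
      filter_upwards [hYae] with ω h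
      rw [h]
    rw [Measure.restrict_congr_set hset]
    apply integral_congr_ae
    apply ae_restrict_of_ae
    filter_upwards [hYae] with ω h
    rw [h]
  exact key.congr (fun n => (heq n).symm)
end
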